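/- arXiv:1211.2024 — 9 statements merged into one kernel-verified Lean document; each statement's English description precedes it below -/
import Mathlib

section
/- (Crystallographic restriction) Let L be a lattice in ℝ³ and let H ≤ O(3) be a point group acting on L. Then every element h ∈ H has finite order, and its order lies in the set {1, 2, 3, 4, 6}. -/
open Polynomial Matrix

/-- A *lattice* in `ℝ³`: a discrete cocompact additive subgroup of `ℝ³`, equivalently
the `ℤ`-span of an `ℝ`-basis of `ℝ³`. -/
def IsLattice (L : AddSubgroup (Fin 3 → ℝ)) : Prop :=
  ∃ b : Module.Basis (Fin 3) ℝ (Fin 3 → ℝ),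
    (L : Set (Fin 3 → ℝ)) = ↑(Submodule.span ℤ (Set.range ⇑b))

section Aux

lemma crystal_tot_dvd_twelve {d : ℕ} (hd : 0 < d) (h : d.totient ≤ 3) : d ∣ 12 := by
  have hd0 : d ≠ 0 := hd.ne'
  rw [← Nat.factorization_le_iff_dvd hd0 (by norm_num)]
  intro p
  by_cases hp : p.Prime
  · by_cases h2 : p = 2
    · subst h2
      have h4 : ¬ (2:ℕ)^3 ∣ d := by
        intro hdvd
        have := Nat.totient_dvd_of_dvd hdvd
        rw [show Nat.totient (2^3) = 4 by decide] at this
        exact absurd (le_trans (Nat.le_of_dvd (Nat.totient_pos.2 hd) this) h) (by norm_num)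
      have hle : d.factorization 2 ≤ 2 := by
        by_contra hc
        exact h4 ((Nat.Prime.pow_dvd_iff_le_factorization Nat.prime_two hd0).2 (by omega))
      have h12 : (2:ℕ)^2 ∣ 12 := by norm_num
      have := (Nat.Prime.pow_dvd_iff_le_factorization Nat.prime_two (by norm_num : (12:ℕ) ≠ 0)).1 h12
      omega
    · by_cases h3 : p = 3
      · subst h3
        have h9 : ¬ (3:ℕ)^2 ∣ d := by
          intro hdvd
          have := Nat.totient_dvd_of_dvd hdvd
          rw [show Nat.totient (3^2) = 6 by decide] at this
          exact absurd (le_trans (Nat.le_of_dvd (Nat.totient_pos.2 hd) this) h) (by norm_num)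
        have hle : d.factorization 3 ≤ 1 := by
          by_contra hc
          exact h9 ((Nat.Prime.pow_dvd_iff_le_factorization Nat.prime_three hd0).2 (by omega))
        have h12 : (3:ℕ)^1 ∣ 12 := by norm_num
        have := (Nat.Prime.pow_dvd_iff_le_factorization Nat.prime_three (by norm_num : (12:ℕ) ≠ 0)).1 h12
        omega
      · have hp5 : 5 ≤ p := by
          rcases hp.two_le.lt_or_eq with h' | h'
          · rcases (by omega : p = 3 ∨ p = 4 ∨ 5 ≤ p) with rfl | rfl | h''
            · exact absurd rfl h3
            · exact absurd hp (by norm_num)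
            · exact h''
          · exact absurd h'.symm h2
        have hnd : ¬ p ∣ d := by
          intro hdvd
          have := Nat.totient_dvd_of_dvd hdvd
          rw [Nat.totient_prime hp] at this
          have := Nat.le_of_dvd (Nat.totient_pos.2 hd) this
          omega
        simp [Nat.factorization_eq_zero_of_not_dvd hnd]
  · simp [Nat.factorization_eq_zero_of_not_prime _ hp]

lemma crystal_subset_lcm : ∀ S ∈ (Nat.divisors 12).powerset,
    (∑ d ∈ S, Nat.totient d) ≤ 3 → S.lcm id ∈ ({1,2,3,4,6} : Finset ℕ) := by decide

lemma crystal_orth_entry_le (A : Matrix (Fin 3) (Fin 3) ℝ)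
    (hA : A ∈ Matrix.orthogonalGroup (Fin 3) ℝ) (i j : Fin 3) : |A i j| ≤ 1 := by
  have h1 : (A * star A) i i = 1 := by
    rw [(Unitary.mem_iff.mp hA).2]; simp [Matrix.one_apply]
  rw [Matrix.mul_apply] at h1
  simp only [Matrix.star_apply, star_trivial] at h1
  have h2 : A i j * A i j ≤ 1 := by
    rw [← h1]
    exact Finset.single_le_sum (fun c _ => mul_self_nonneg (A i c)) (Finset.mem_univ j)
  nlinarith [abs_nonneg (A i j), abs_mul_abs_self (A i j)]

noncomputable section Basis
variable (b : Module.Basis (Fin 3) ℝ (Fin 3 → ℝ))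

private abbrev e3 : Module.Basis (Fin 3) ℝ (Fin 3 → ℝ) := Pi.basisFun ℝ (Fin 3)

lemma crystal_Qvec (w : Fin 3 → ℝ) : (b.toMatrix ⇑e3) *ᵥ w = ⇑(b.repr w) := by
  have h : ⇑(e3.repr w) = w := by funext i; simp [e3]
  conv_lhs => rw [← h]
  rw [Module.Basis.toMatrix_mulVec_repr]

lemma crystal_entry_eq (g : Matrix (Fin 3) (Fin 3) ℝ) (i j : Fin 3) :
    (b.toMatrix ⇑e3 * g * e3.toMatrix ⇑b) i j = b.repr (g *ᵥ b j) i := by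
  have hP : ∀ l j', (e3.toMatrix ⇑b) l j' = b j' l := by
    intro l j'; simp [Module.Basis.toMatrix_apply]
  have h1 : (g * e3.toMatrix ⇑b) = Matrix.of (fun l j' => (g *ᵥ b j') l) := by
    ext l j'
    simp only [Matrix.mul_apply, Matrix.of_apply, Matrix.mulVec, dotProduct, hP]
  rw [Matrix.mul_assoc, h1]
  have h2 : (b.toMatrix ⇑e3 * Matrix.of (fun l j' => (g *ᵥ b j') l)) i j
      = ((b.toMatrix ⇑e3) *ᵥ (g *ᵥ b j)) i := by
    simp [Matrix.mul_apply, Matrix.mulVec, dotProduct]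
  rw [h2, crystal_Qvec]

end Basis
end Aux

/-- **the crystallographic restriction.**  Let `L` be a lattice in `ℝ³`
and let `H ≤ O(3)` be a point group acting on `L`.  Then every element `h ∈ H` has
finite order, and its order lies in `{1, 2, 3, 4, 6}`. -/
theorem crystallographic_restriction (L : AddSubgroup (Fin 3 → ℝ)) (hL : IsLattice L)
    (H : Subgroup (Matrix.orthogonalGroup (Fin 3) ℝ))
    (hHL : ∀ h ∈ H, (fun v => Matrix.mulVec ((h : Matrix (Fin 3) (Fin 3) ℝ)) v) ''
      (L : Set (Fin 3 → ℝ)) = (L : Set (Fin 3 → ℝ))) :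
    ∀ h ∈ H, IsOfFinOrder h ∧ orderOf h ∈ ({1, 2, 3, 4, 6} : Set ℕ) := by
  obtain ⟨b, hb⟩ := hL
  intro h hH
  classical
  set Q : Matrix (Fin 3) (Fin 3) ℝ := b.toMatrix ⇑(e3) with hQdef
  set P : Matrix (Fin 3) (Fin 3) ℝ := (e3).toMatrix ⇑b with hPdef
  have hQP : Q * P = 1 := Module.Basis.toMatrix_mul_toMatrix_flip b e3
  have hPQ : P * Q = 1 := Module.Basis.toMatrix_mul_toMatrix_flip e3 b
  -- all powers of h preserve the lattice and have integer matrices w.r.t. b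
  have hmemL : ∀ k : ℕ, ∀ j, ((h ^ k : Matrix.orthogonalGroup (Fin 3) ℝ) : Matrix (Fin 3) (Fin 3) ℝ) *ᵥ b j
      ∈ Submodule.span ℤ (Set.range ⇑b) := by
    intro k j
    have hbk : b j ∈ (L : Set (Fin 3 → ℝ)) := by
      rw [hb]; exact Submodule.subset_span ⟨j, rfl⟩
    have himg := hHL (h ^ k) (pow_mem hH k)
    have : ((h ^ k : Matrix.orthogonalGroup (Fin 3) ℝ) : Matrix (Fin 3) (Fin 3) ℝ) *ᵥ b j
        ∈ (L : Set (Fin 3 → ℝ)) := by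
      rw [← himg]; exact Set.mem_image_of_mem _ hbk
    rw [hb] at this; exact this
  have hintcoord : ∀ k : ℕ, ∀ i j : Fin 3,
      ∃ z : ℤ, (z : ℝ) = (Q * ((h ^ k : Matrix.orthogonalGroup (Fin 3) ℝ) : Matrix (Fin 3) (Fin 3) ℝ) * P) i j := by
    intro k i j
    rw [crystal_entry_eq]
    have := (Module.Basis.mem_span_iff_repr_mem (R := ℤ) b _).1 (hmemL k j) i
    obtain ⟨z, hz⟩ := this
    exact ⟨z, by simpa using hz⟩
  -- the integer matrix representing h
  set g : Matrix (Fin 3) (Fin 3) ℝ := ((h : Matrix.orthogonalGroup (Fin 3) ℝ) : Matrix (Fin 3) (Fin 3) ℝ) with hgdef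
  have hint1 := hintcoord 1
  set M : Matrix (Fin 3) (Fin 3) ℤ := Matrix.of (fun i j => (hint1 i j).choose) with hMdef
  have hM : M.map (Int.cast : ℤ → ℝ) = Q * g * P := by
    ext i j
    have := (hint1 i j).choose_spec
    simpa [hMdef, hgdef, Matrix.map_apply] using this
  -- conjugation and powers
  have hconj : ∀ k : ℕ, (Q * g * P) ^ k = Q * g ^ k * P := by
    intro k
    induction k with
    | zero => simp [pow_zero, hQP]
    | succ k ih =>
        rw [pow_succ, ih, pow_succ]
        calc Q * g ^ k * P * (Q * g * P) = Q * g ^ k * ((P * Q) * (g * P)) := by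
              simp only [Matrix.mul_assoc]
          _ = Q * (g ^ k * g) * P := by rw [hPQ, one_mul]; simp only [Matrix.mul_assoc]
  have hmappow : ∀ k : ℕ, (M ^ k).map (Int.cast : ℤ → ℝ) = Q * g ^ k * P := by
    intro k
    have h1 : (M ^ k).map (Int.cast : ℤ → ℝ) = (M.map (Int.cast : ℤ → ℝ)) ^ k := by
      simpa [RingHom.mapMatrix_apply] using map_pow ((Int.castRingHom ℝ).mapMatrix) M k
    rw [h1, hM, hconj]
  have hg_pow : ∀ k : ℕ, g ^ k = ((h ^ k : Matrix.orthogonalGroup (Fin 3) ℝ) : Matrix (Fin 3) (Fin 3) ℝ) := by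
    intro k
    rw [hgdef]
    exact (SubmonoidClass.coe_pow h k).symm
  have hinj : ∀ A : Matrix (Fin 3) (Fin 3) ℤ, A.map (Int.cast : ℤ → ℝ) = 1 → A = 1 := by
    intro A hA
    ext i j
    have h1 : (A.map (Int.cast : ℤ → ℝ)) i j = (1 : Matrix (Fin 3) (Fin 3) ℝ) i j := by rw [hA]
    simp only [Matrix.map_apply, Matrix.one_apply] at h1 ⊢
    by_cases hij : i = j <;> simp [hij] at h1 ⊢ <;> exact_mod_cast h1
  have hsandwich : ∀ X : Matrix (Fin 3) (Fin 3) ℝ, P * (Q * X * P) * Q = X := by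
    intro X
    calc P * (Q * X * P) * Q = (P * Q) * X * (P * Q) := by simp only [Matrix.mul_assoc]
      _ = X := by rw [hPQ, one_mul, mul_one]
  have hkey : ∀ k : ℕ, h ^ k = 1 ↔ M ^ k = 1 := by
    intro k
    constructor
    · intro hk
      apply hinj
      rw [hmappow, hg_pow, hk]
      simpa using hQP
    · intro hk
      have h1 : Q * g ^ k * P = 1 := by
        rw [← hmappow, hk]
        simp [Matrix.map_one]
      have h2 : g ^ k = 1 := by
        have := congrArg (fun X => P * X * Q) h1
        rw [hsandwich] at this
        rw [this, mul_one, hPQ]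
      apply Subtype.coe_injective
      simp only [SubmonoidClass.coe_pow, OneMemClass.coe_one]
      exact h2
  -- finiteness of order
  set C : ℝ := (∑ p, ∑ q, |Q p q|) * (∑ p, ∑ q, |P p q|) with hC
  have hboundR : ∀ k : ℕ, ∀ i j, |(Q * g ^ k * P) i j| ≤ C := by
    intro k i j
    have hgk : ∀ a c, |(g ^ k) a c| ≤ 1 := by
      intro a c
      have hmm : g ^ k ∈ Matrix.orthogonalGroup (Fin 3) ℝ := by
        rw [hg_pow k]; exact (h ^ k).2
      exact crystal_orth_entry_le _ hmm a c
    have hQrow : (∑ a, |Q i a|) ≤ ∑ p, ∑ q, |Q p q| :=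
      Finset.single_le_sum (f := fun p => ∑ q, |Q p q|)
        (fun p _ => Finset.sum_nonneg fun q _ => abs_nonneg _) (Finset.mem_univ i)
    have hPcol : (∑ c, |P c j|) ≤ ∑ p, ∑ q, |P p q| := by
      have hrow : ∀ c : Fin 3, |P c j| ≤ ∑ q, |P c q| := fun c =>
        Finset.single_le_sum (f := fun q => |P c q|) (fun q _ => abs_nonneg _) (Finset.mem_univ j)
      exact Finset.sum_le_sum fun c _ => hrow c
    have hQg : ∀ c, |(Q * g ^ k) i c| ≤ ∑ a, |Q i a| := by
      intro c
      rw [Matrix.mul_apply]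
      calc |∑ a, Q i a * (g ^ k) a c| ≤ ∑ a, |Q i a * (g ^ k) a c| :=
            Finset.abs_sum_le_sum_abs _ _
        _ = ∑ a, |Q i a| * |(g ^ k) a c| := by simp [abs_mul]
        _ ≤ ∑ a, |Q i a| * 1 := Finset.sum_le_sum fun a _ =>
            mul_le_mul_of_nonneg_left (hgk a c) (abs_nonneg _)
        _ = ∑ a, |Q i a| := by simp
    have hQnn : (0:ℝ) ≤ ∑ a, |Q i a| := Finset.sum_nonneg fun _ _ => abs_nonneg _
    calc |(Q * g ^ k * P) i j| = |∑ c, (Q * g ^ k) i c * P c j| := by rw [Matrix.mul_apply]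
      _ ≤ ∑ c, |(Q * g ^ k) i c * P c j| := Finset.abs_sum_le_sum_abs _ _
      _ = ∑ c, |(Q * g ^ k) i c| * |P c j| := by simp [abs_mul]
      _ ≤ ∑ c, (∑ a, |Q i a|) * |P c j| := Finset.sum_le_sum fun c _ =>
          mul_le_mul_of_nonneg_right (hQg c) (abs_nonneg _)
      _ = (∑ a, |Q i a|) * (∑ c, |P c j|) := by rw [Finset.mul_sum]
      _ ≤ C := mul_le_mul hQrow hPcol (Finset.sum_nonneg fun _ _ => abs_nonneg _)
          (le_trans hQnn hQrow)
  set N : ℤ := ⌈C⌉ with hN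
  have hMbound : ∀ k : ℕ, ∀ i j, (M ^ k) i j ∈ Set.Icc (-N) N := by
    intro k i j
    have h1 : |(((M ^ k) i j : ℤ) : ℝ)| ≤ C := by
      have h2 := hboundR k i j
      rw [← hmappow k] at h2
      simpa [Matrix.map_apply] using h2
    have h2 : ((|(M ^ k) i j| : ℤ) : ℝ) ≤ (N : ℝ) := by
      rw [Int.cast_abs]; exact le_trans h1 (Int.le_ceil C)
    have h3 : |(M ^ k) i j| ≤ N := by exact_mod_cast h2
    exact Set.mem_Icc.mpr (abs_le.mp h3)
  have hfin : (Set.univ.pi fun _ : Fin 3 =>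
      Set.univ.pi fun _ : Fin 3 => Set.Icc (-N) N).Finite :=
    Set.Finite.pi fun _ => Set.Finite.pi fun _ => Set.finite_Icc _ _
  have hmem' : ∀ k : ℕ, (M ^ k : Matrix (Fin 3) (Fin 3) ℤ) ∈
      (Set.univ.pi fun _ : Fin 3 => Set.univ.pi fun _ : Fin 3 => Set.Icc (-N) N) := by
    intro k
    refine Set.mem_pi.mpr ?_
    intro i _
    rw [Set.mem_pi]
    intro j _
    exact hMbound k i j
  haveI := hfin.to_subtype
  obtain ⟨k, l, hkl, hMkl⟩ := Finite.exists_ne_map_eq_of_infinite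
    (fun k : ℕ => (⟨M ^ k, hmem' k⟩ : {A : Fin 3 → Fin 3 → ℤ // A ∈
      (Set.univ.pi fun _ : Fin 3 => Set.univ.pi fun _ : Fin 3 => Set.Icc (-N) N)}))
  have hMeq : M ^ k = M ^ l := congrArg Subtype.val hMkl
  have hpow_eq : ∀ {a c : ℕ}, M ^ a = M ^ c → h ^ a = h ^ c := by
    intro a c hac
    have h1 : Q * g ^ a * P = Q * g ^ c * P := by rw [← hmappow, ← hmappow, hac]
    have h2 : g ^ a = g ^ c := by
      have h3 := congrArg (fun X => P * X * Q) h1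
      rwa [hsandwich, hsandwich] at h3
    apply Subtype.coe_injective
    simp only [SubmonoidClass.coe_pow]
    exact h2
  have hmain : ∀ {a c : ℕ}, a < c → h ^ a = h ^ c → IsOfFinOrder h := by
    intro a c hac heq
    have h2 : h ^ (c - a) * h ^ a = 1 * h ^ a := by
      rw [one_mul, ← pow_add, Nat.sub_add_cancel hac.le, heq]
    exact isOfFinOrder_iff_pow_eq_one.mpr ⟨c - a, by omega, mul_right_cancel h2⟩
  have hfo : IsOfFinOrder h := by
    rcases hkl.lt_or_gt with hlt | hlt
    · exact hmain hlt (hpow_eq hMeq)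
    · exact hmain hlt (hpow_eq hMeq.symm)
  refine ⟨hfo, ?_⟩
  -- order restriction
  set n := orderOf h with hn
  have hn0 : 0 < n := hfo.orderOf_pos
  set Mq : Matrix (Fin 3) (Fin 3) ℚ := M.map (Int.cast : ℤ → ℚ) with hMq
  have hmapowq : ∀ k : ℕ, (M ^ k).map (Int.cast : ℤ → ℚ) = Mq ^ k := by
    intro k
    simpa [RingHom.mapMatrix_apply, hMq] using map_pow ((Int.castRingHom ℚ).mapMatrix) M k
  have hinjq : ∀ A : Matrix (Fin 3) (Fin 3) ℤ, A.map (Int.cast : ℤ → ℚ) = 1 → A = 1 := by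
    intro A hA
    ext i j
    have h1 : (A.map (Int.cast : ℤ → ℚ)) i j = (1 : Matrix (Fin 3) (Fin 3) ℚ) i j := by rw [hA]
    simp only [Matrix.map_apply, Matrix.one_apply] at h1 ⊢
    by_cases hij : i = j <;> simp [hij] at h1 ⊢ <;> exact_mod_cast h1
  have hkeyq : ∀ k : ℕ, Mq ^ k = 1 ↔ h ^ k = 1 := by
    intro k
    rw [hkey k]
    constructor
    · intro hk
      apply hinjq
      rw [hmapowq, hk]
    · intro hk
      rw [← hmapowq, hk]
      exact Matrix.map_one _ Int.cast_zero Int.cast_one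
  have hMqint : IsIntegral ℚ Mq := ⟨Mq.charpoly, Mq.charpoly_monic, Mq.aeval_self_charpoly⟩
  set μ := minpoly ℚ Mq with hμ
  have hμne : μ ≠ 0 := minpoly.ne_zero hMqint
  have hμdeg : μ.natDegree ≤ 3 := by
    have hdvd : μ ∣ Mq.charpoly := minpoly.dvd ℚ Mq Mq.aeval_self_charpoly
    have := Polynomial.natDegree_le_of_dvd hdvd Mq.charpoly_monic.ne_zero
    rwa [Matrix.charpoly_natDegree_eq_dim, Fintype.card_fin] at this
  have hMqn : Mq ^ n = 1 := (hkeyq n).mpr (pow_orderOf_eq_one h)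
  have hμdvdXn : μ ∣ X ^ n - 1 :=
    minpoly.dvd ℚ Mq (by rw [map_sub, map_pow, aeval_X, _root_.map_one, hMqn, sub_self])
  set S : Finset ℕ := n.divisors.filter (fun d => cyclotomic d ℚ ∣ μ) with hS
  have hdpos : ∀ d ∈ S, 0 < d := fun d hd =>
    Nat.pos_of_mem_divisors (Finset.mem_of_mem_filter d hd)
  have hpair : (↑S : Set ℕ).Pairwise (Function.onFun IsCoprime fun d => cyclotomic d ℚ) := by
    intro d hd e he hne
    have hd0 : 0 < d := hdpos d hd
    have he0 : 0 < e := hdpos e he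
    refine (Polynomial.cyclotomic.irreducible_rat hd0).coprime_iff_not_dvd.mpr ?_
    intro hdvd
    have hass : Associated (cyclotomic d ℚ) (cyclotomic e ℚ) :=
      (Polynomial.cyclotomic.irreducible_rat hd0).associated_of_dvd
        (Polynomial.cyclotomic.irreducible_rat he0) hdvd
    have heq : cyclotomic d ℚ = cyclotomic e ℚ :=
      Polynomial.eq_of_monic_of_associated (cyclotomic.monic d ℚ) (cyclotomic.monic e ℚ) hass
    exact hne (cyclotomic_injective heq)
  have hproddvd : (∏ d ∈ S, cyclotomic d ℚ) ∣ μ :=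
    Finset.prod_dvd_of_coprime hpair (fun d hd => (Finset.mem_filter.mp hd).2)
  have hsum : (∑ d ∈ S, d.totient) ≤ 3 := by
    have h1 : (∏ d ∈ S, cyclotomic d ℚ).natDegree ≤ μ.natDegree :=
      Polynomial.natDegree_le_of_dvd hproddvd hμne
    have h2 : (∏ d ∈ S, cyclotomic d ℚ).natDegree = ∑ d ∈ S, d.totient := by
      rw [Polynomial.natDegree_prod _ _ (fun d _ => cyclotomic_ne_zero d ℚ)]
      exact Finset.sum_congr rfl fun d _ => natDegree_cyclotomic d ℚ
    omega
  have hμdvdprod : μ ∣ ∏ d ∈ S, cyclotomic d ℚ := by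
    have hfact : (X : ℚ[X]) ^ n - 1 = (∏ d ∈ S, cyclotomic d ℚ) *
        ∏ d ∈ n.divisors.filter (fun d => ¬ cyclotomic d ℚ ∣ μ), cyclotomic d ℚ := by
      rw [← Polynomial.prod_cyclotomic_eq_X_pow_sub_one hn0 ℚ, hS,
        Finset.prod_filter_mul_prod_filter_not]
    have hcop : IsCoprime μ
        (∏ d ∈ n.divisors.filter (fun d => ¬ cyclotomic d ℚ ∣ μ), cyclotomic d ℚ) :=
      IsCoprime.prod_right fun d hd => by
        have hd0 : 0 < d := Nat.pos_of_mem_divisors (Finset.mem_of_mem_filter d hd)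
        exact ((Polynomial.cyclotomic.irreducible_rat hd0).coprime_iff_not_dvd.mpr
          (Finset.mem_filter.mp hd).2).symm
    exact hcop.dvd_of_dvd_mul_right (hfact ▸ hμdvdXn)
  set m := S.lcm id with hm
  have hmdvdn : m ∣ n := Finset.lcm_dvd fun d hd =>
    (Nat.mem_divisors.mp (Finset.mem_of_mem_filter d hd)).1
  have hm0 : m ≠ 0 := by
    intro h0
    rw [h0] at hmdvdn
    exact hn0.ne' (Nat.eq_zero_of_zero_dvd hmdvdn)
  have hndvdm : n ∣ m := by
    have hsub : S ⊆ m.divisors := fun d hd => Nat.mem_divisors.mpr ⟨Finset.dvd_lcm hd, hm0⟩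
    have hprodm : (∏ d ∈ S, cyclotomic d ℚ) ∣ (X : ℚ[X]) ^ m - 1 := by
      rw [← Polynomial.prod_cyclotomic_eq_X_pow_sub_one (Nat.pos_of_ne_zero hm0) ℚ]
      exact Finset.prod_dvd_prod_of_subset _ _ _ hsub
    have hμXm : μ ∣ (X : ℚ[X]) ^ m - 1 := hμdvdprod.trans hprodm
    obtain ⟨c, hc⟩ := hμXm
    have hz : Mq ^ m - 1 = 0 := by
      have h4 := congrArg (aeval Mq) hc
      rwa [map_sub, map_pow, aeval_X, _root_.map_one, _root_.map_mul, minpoly.aeval, zero_mul] at h4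
    exact orderOf_dvd_of_pow_eq_one ((hkeyq m).mp (by rwa [sub_eq_zero] at hz))
  have hnm : n = m := Nat.dvd_antisymm hndvdm hmdvdn
  have hS12 : S ∈ (Nat.divisors 12).powerset := by
    rw [Finset.mem_powerset]
    intro d hd
    exact Nat.mem_divisors.mpr ⟨crystal_tot_dvd_twelve (hdpos d hd)
      (le_trans (Finset.single_le_sum (fun d _ => Nat.zero_le _) hd) hsum), by norm_num⟩
  have hfinal := crystal_subset_lcm S hS12 hsum
  rw [← hm, ← hnm] at hfinal
  simp only [Finset.mem_insert, Finset.mem_singleton] at hfinal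
  simpa [Set.mem_insert_iff, Set.mem_singleton_iff] using hfinal
end

section
/- Let H ≤ SO(3) be a nontrivial point group (so H is finite). Then, summing over a set T of representatives of the H-orbits on the set of pole vectors of H, one has the identity 2 − 2/|H| = Σ_{v ∈ T} (1 − 1/|H_v|), where H_v = {h ∈ H : h·v = v}. -/
/-- `v` is a *pole vector* of `H`: a unit vector fixed by some nontrivial element of `H`. -/
def IsPoleVector (H : Subgroup (Matrix.orthogonalGroup (Fin 3) ℝ)) (v : Fin 3 → ℝ) : Prop :=
  dotProduct v v = 1 ∧
    ∃ h ∈ H, h ≠ 1 ∧ Matrix.mulVec ((h : Matrix (Fin 3) (Fin 3) ℝ)) v = v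

/-- `v` and `w` lie in the same `H`-orbit. -/
def SameOrbit (H : Subgroup (Matrix.orthogonalGroup (Fin 3) ℝ)) (v w : Fin 3 → ℝ) : Prop :=
  ∃ h ∈ H, Matrix.mulVec ((h : Matrix (Fin 3) (Fin 3) ℝ)) v = w

/-- The order of the stabilizer `H_v = {h ∈ H : h · v = v}`. -/
noncomputable def stabOrder (H : Subgroup (Matrix.orthogonalGroup (Fin 3) ℝ))
    (v : Fin 3 → ℝ) : ℕ :=
  Nat.card {h : Matrix.orthogonalGroup (Fin 3) ℝ //
    h ∈ H ∧ Matrix.mulVec ((h : Matrix (Fin 3) (Fin 3) ℝ)) v = v}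

/-! ### Auxiliary material -/

namespace PoleCount

open Matrix

abbrev OG := Matrix.orthogonalGroup (Fin 3) ℝ

lemma dot_nonneg (v : Fin 3 → ℝ) : 0 ≤ dotProduct v v :=
  Finset.sum_nonneg fun _ _ => mul_self_nonneg _

lemma dot_pos {v : Fin 3 → ℝ} (hv : v ≠ 0) : 0 < dotProduct v v := by
  rcases (dot_nonneg v).lt_or_eq with h | h
  · exact h
  · exfalso; apply hv
    have := (Finset.sum_eq_zero_iff_of_nonneg (fun i _ => mul_self_nonneg (v i))).1 h.symm
    funext i
    exact mul_self_eq_zero.1 (this i (Finset.mem_univ i))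

lemma dot_mulVec_mulVec {A : Matrix (Fin 3) (Fin 3) ℝ} (hA : Aᵀ * A = 1)
    (x y : Fin 3 → ℝ) : dotProduct (A.mulVec x) (A.mulVec y) = dotProduct x y := by
  rw [Matrix.dotProduct_mulVec, ← Matrix.mulVec_transpose, Matrix.mulVec_mulVec, hA,
    Matrix.one_mulVec]

lemma orth_tmul (h : OG) :
    (h : Matrix (Fin 3) (Fin 3) ℝ)ᵀ * (h : Matrix (Fin 3) (Fin 3) ℝ) = 1 := by
  have h2 := Matrix.mem_unitaryGroup_iff'.1 h.2
  rwa [Matrix.star_eq_conjTranspose, Matrix.conjTranspose_eq_transpose_of_trivial] at h2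

lemma det_sub_one {A : Matrix (Fin 3) (Fin 3) ℝ} (hA : Aᵀ * A = 1) (hdet : A.det = 1) :
    (A - 1).det = 0 := by
  have h1 : (A - 1)ᵀ = Aᵀ * (1 - A) := by
    rw [Matrix.mul_sub, hA, Matrix.mul_one, Matrix.transpose_sub, Matrix.transpose_one]
  have h2 : (A - 1).det = (A - 1)ᵀ.det := (Matrix.det_transpose _).symm
  have h3 : Aᵀ.det = 1 := by rw [Matrix.det_transpose]; exact hdet
  have h4 : (1 - A : Matrix (Fin 3) (Fin 3) ℝ) = -(A - 1) := by rw [neg_sub]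
  rw [h1, Matrix.det_mul, h3, one_mul, h4, Matrix.det_neg] at h2
  simp only [Fintype.card_fin] at h2
  norm_num at h2
  linarith

lemma exists_fixed_nonzero {A : Matrix (Fin 3) (Fin 3) ℝ} (hA : Aᵀ * A = 1)
    (hdet : A.det = 1) : ∃ v ≠ 0, A.mulVec v = v := by
  obtain ⟨v, hv0, hv⟩ := (Matrix.exists_mulVec_eq_zero_iff).2 (det_sub_one hA hdet)
  refine ⟨v, hv0, ?_⟩
  have h5 := hv
  rw [Matrix.sub_mulVec, Matrix.one_mulVec, sub_eq_zero] at h5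
  exact h5

lemma fixed_pair_dep {A : Matrix (Fin 3) (Fin 3) ℝ} (hA : Aᵀ * A = 1) (hdet : A.det = 1)
    (hA1 : A ≠ 1) {u w : Fin 3 → ℝ} (hu : A.mulVec u = u) (hw : A.mulVec w = w) :
    ¬ LinearIndependent ℝ ![u, w] := by
  intro hind
  have hu0 : u ≠ 0 := by have := hind.ne_zero 0; simpa using this
  have hw0 : w ≠ 0 := by have := hind.ne_zero 1; simpa using this
  -- the linear functional pair
  set f : (Fin 3 → ℝ) →ₗ[ℝ] (Fin 2 → ℝ) :=
    { toFun := fun x => ![dotProduct u x, dotProduct w x]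
      map_add' := by
        intro x y; funext i
        fin_cases i <;> simp [dotProduct_add]
      map_smul' := by
        intro c x; funext i
        fin_cases i <;> simp [dotProduct_smul, smul_eq_mul] } with hf
  have hfapp : ∀ x, f x = ![dotProduct u x, dotProduct w x] := fun x => rfl
  -- Gram determinant is positive
  obtain ⟨p, hp⟩ : ∃ p, dotProduct u u = p := ⟨_, rfl⟩
  obtain ⟨q, hq⟩ : ∃ q, dotProduct u w = q := ⟨_, rfl⟩
  obtain ⟨r, hr⟩ : ∃ r, dotProduct w w = r := ⟨_, rfl⟩
  have hq' : dotProduct w u = q := by rw [dotProduct_comm, hq]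
  have hppos : 0 < p := hp ▸ dot_pos hu0
  have hrpos : 0 < r := hr ▸ dot_pos hw0
  have hgram : 0 < p * r - q * q := by
    have hy0 : p • w - q • u ≠ 0 := by
      intro h0
      refine hppos.ne' ((LinearIndependent.pair_iff.1 hind) (-q) p ?_).2
      rw [neg_smul, add_comm, ← sub_eq_add_neg]; exact h0
    have h2 : 0 < dotProduct (p • w - q • u) (p • w - q • u) := dot_pos hy0
    have h3 : dotProduct (p • w - q • u) (p • w - q • u) = p * (p * r - q * q) := by
      simp only [sub_dotProduct, dotProduct_sub, smul_dotProduct,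
        dotProduct_smul, smul_eq_mul, hp, hq, hr, hq']
      ring
    nlinarith
  have hgram' : p * r - q * q ≠ 0 := ne_of_gt hgram
  -- the kernel of f has dimension 1
  have hfu : f u = ![p, q] := by rw [hfapp, hp, hq']
  have hfw : f w = ![q, r] := by rw [hfapp, hq, hr]
  have hindf : LinearIndependent ℝ ![f u, f w] := by
    rw [hfu, hfw, LinearIndependent.pair_iff]
    intro a b hab
    have h0 : a * p + b * q = 0 := by
      have := congrFun hab 0; simpa [smul_eq_mul] using this
    have h1 : a * q + b * r = 0 := by
      have := congrFun hab 1; simpa [smul_eq_mul] using this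
    have ha : a * (p * r - q * q) = (a * p + b * q) * r - (a * q + b * r) * q := by ring
    have hb : b * (p * r - q * q) = (a * q + b * r) * p - (a * p + b * q) * q := by ring
    rw [h0, h1] at ha hb
    simp only [zero_mul, sub_zero, zero_sub, sub_self] at ha hb
    norm_num at ha hb
    exact ⟨ha.resolve_right hgram', hb.resolve_right hgram'⟩
  have hrange2 : Module.finrank ℝ (LinearMap.range f) = 2 := by
    refine le_antisymm ?_ ?_
    · have := Submodule.finrank_le (LinearMap.range f)
      simpa using this
    · have hspan : Submodule.span ℝ (Set.range ![f u, f w]) ≤ LinearMap.range f := by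
        rw [Submodule.span_le]
        rintro x ⟨i, rfl⟩
        fin_cases i
        · exact ⟨u, rfl⟩
        · exact ⟨w, rfl⟩
      have hcard : Module.finrank ℝ (Submodule.span ℝ (Set.range ![f u, f w])) = 2 := by
        rw [finrank_span_eq_card hindf]
        simp
      calc (2 : ℕ) = Module.finrank ℝ (Submodule.span ℝ (Set.range ![f u, f w])) := hcard.symm
        _ ≤ Module.finrank ℝ (LinearMap.range f) := Submodule.finrank_mono hspan
  have hker1 : Module.finrank ℝ (LinearMap.ker f) = 1 := by
    have h5 := LinearMap.finrank_range_add_finrank_ker f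
    rw [hrange2] at h5
    have h3 : Module.finrank ℝ (Fin 3 → ℝ) = 3 := by simp
    omega
  -- pick a nonzero kernel vector z
  have hkerbot : LinearMap.ker f ≠ ⊥ := by
    intro h; rw [h] at hker1; simp at hker1
  obtain ⟨z, hzmem, hz0⟩ := Submodule.exists_mem_ne_zero_of_ne_bot hkerbot
  have hspanz : Submodule.span ℝ {z} = LinearMap.ker f := by
    apply Submodule.eq_of_le_of_finrank_le (Submodule.span_le.2 (by simpa using hzmem))
    rw [hker1, finrank_span_singleton hz0]
  have hz1 : dotProduct u z = 0 := by
    have := congrFun (LinearMap.mem_ker.1 hzmem) 0; simpa [hfapp] using this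
  have hz2 : dotProduct w z = 0 := by
    have := congrFun (LinearMap.mem_ker.1 hzmem) 1; simpa [hfapp] using this
  have hAz : A.mulVec z ∈ LinearMap.ker f := by
    rw [LinearMap.mem_ker]
    have e1 : dotProduct u (A.mulVec z) = 0 := by
      calc dotProduct u (A.mulVec z) = dotProduct (A.mulVec u) (A.mulVec z) := by rw [hu]
        _ = dotProduct u z := dot_mulVec_mulVec hA u z
        _ = 0 := hz1
    have e2 : dotProduct w (A.mulVec z) = 0 := by
      calc dotProduct w (A.mulVec z) = dotProduct (A.mulVec w) (A.mulVec z) := by rw [hw]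
        _ = dotProduct w z := dot_mulVec_mulVec hA w z
        _ = 0 := hz2
    rw [hfapp, e1, e2]
    funext i; fin_cases i <;> rfl
  obtain ⟨c, hc⟩ := Submodule.mem_span_singleton.1 (hspanz ▸ hAz)
  have hzz : 0 < dotProduct z z := dot_pos hz0
  have hc2 : c * c = 1 := by
    have hcz : dotProduct (A.mulVec z) (A.mulVec z) = dotProduct z z :=
      dot_mulVec_mulVec hA z z
    rw [← hc] at hcz
    simp only [smul_dotProduct, dotProduct_smul, smul_eq_mul] at hcz
    have : (c * c - 1) * dotProduct z z = 0 := by linarith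
    rcases mul_eq_zero.1 this with h | h
    · linarith
    · exact absurd h hzz.ne'
  -- u, w, z are linearly independent
  have hli : LinearIndependent ℝ ![u, w, z] := by
    rw [Fintype.linearIndependent_iff]
    intro g hg
    have hsum : g 0 • u + g 1 • w + g 2 • z = 0 := by
      have := hg
      rwa [Fin.sum_univ_three] at this
    have hdz : g 2 * dotProduct z z = 0 := by
      have := congrArg (fun x => dotProduct x z) hsum
      simpa [add_dotProduct, smul_dotProduct, smul_eq_mul,
        show dotProduct u z = 0 from hz1, show dotProduct w z = 0 from hz2] using this
    have hg2 : g 2 = 0 := by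
      rcases mul_eq_zero.1 hdz with h | h
      · exact h
      · exact absurd h hzz.ne'
    have hpair : g 0 • u + g 1 • w = 0 := by
      rw [hg2, zero_smul, add_zero] at hsum; exact hsum
    obtain ⟨h0, h1⟩ := (LinearIndependent.pair_iff.1 hind) _ _ hpair
    intro i; fin_cases i <;> assumption
  -- build a basis and compute the determinant
  have hcard : Fintype.card (Fin 3) = Module.finrank ℝ (Fin 3 → ℝ) := by simp
  obtain ⟨b, hbcoe⟩ : ∃ b : Module.Basis (Fin 3) ℝ (Fin 3 → ℝ), ⇑b = ![u, w, z] :=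
    ⟨basisOfLinearIndependentOfCardEqFinrank hli hcard,
      coe_basisOfLinearIndependentOfCardEqFinrank _ _⟩
  have hmat : LinearMap.toMatrix b b (Matrix.toLin' A) = Matrix.diagonal ![1, 1, c] := by
    ext i j
    rw [LinearMap.toMatrix_apply, Matrix.toLin'_apply]
    have hbj : A.mulVec (b j) = (![1, 1, c] : Fin 3 → ℝ) j • b j := by
      rw [show b j = ![u, w, z] j from congrFun hbcoe j]
      fin_cases j <;> simp [hu, hw, hc.symm]
    rw [hbj, LinearEquiv.map_smul, b.repr_self]
    by_cases hij : i = j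
    · subst hij; simp [Matrix.diagonal_apply]
    · simp [Matrix.diagonal_apply, hij, Finsupp.single_apply, Ne.symm hij]
  have hc1 : c = 1 := by
    have h6 : LinearMap.det (Matrix.toLin' A) = A.det := LinearMap.det_toLin' A
    have h7 : (LinearMap.toMatrix b b (Matrix.toLin' A)).det
        = LinearMap.det (Matrix.toLin' A) := LinearMap.det_toMatrix b _
    rw [hmat, h6, hdet, Matrix.det_diagonal, Fin.prod_univ_three] at h7
    simpa using h7
  -- then A fixes a basis, so A = 1
  apply hA1
  have hAz1 : A.mulVec z = z := by rw [← hc, hc1, one_smul]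
  have heq : Matrix.toLin' A = Matrix.toLin' (1 : Matrix (Fin 3) (Fin 3) ℝ) := by
    apply b.ext
    intro i
    rw [Matrix.toLin'_apply, Matrix.toLin'_apply, Matrix.one_mulVec,
      show b i = ![u, w, z] i from congrFun hbcoe i]
    fin_cases i <;> simp [hu, hw, hAz1]
  calc A = LinearMap.toMatrix' (Matrix.toLin' A) := (LinearMap.toMatrix'_toLin' A).symm
    _ = LinearMap.toMatrix' (Matrix.toLin' (1 : Matrix (Fin 3) (Fin 3) ℝ)) := by rw [heq]
    _ = 1 := LinearMap.toMatrix'_toLin' 1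

lemma fix_set_eq {A : Matrix (Fin 3) (Fin 3) ℝ} (hA : Aᵀ * A = 1) (hdet : A.det = 1)
    (hA1 : A ≠ 1) :
    ∃ u : Fin 3 → ℝ, dotProduct u u = 1 ∧ A.mulVec u = u ∧ u ≠ -u ∧
      {x : Fin 3 → ℝ | dotProduct x x = 1 ∧ A.mulVec x = x} = {u, -u} := by
  obtain ⟨v, hv0, hv⟩ := exists_fixed_nonzero hA hdet
  have hdvv : 0 < dotProduct v v := dot_pos hv0
  set s := Real.sqrt (dotProduct v v) with hs
  have hspos : 0 < s := Real.sqrt_pos.2 hdvv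
  have hss : s * s = dotProduct v v := Real.mul_self_sqrt hdvv.le
  set u := s⁻¹ • v with hudef
  have hu1 : dotProduct u u = 1 := by
    rw [hudef, smul_dotProduct, dotProduct_smul, smul_eq_mul, smul_eq_mul,
      ← hss]
    field_simp
  have hu0 : u ≠ 0 := by
    intro h; rw [h] at hu1; simp at hu1
  have huf : A.mulVec u = u := by rw [hudef, Matrix.mulVec_smul, hv]
  have hune : u ≠ -u := by
    intro h
    have h2 : dotProduct u u = -(dotProduct u u) := by
      nth_rewrite 2 [h]
      rw [dotProduct_neg]
    rw [hu1] at h2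
    linarith
  refine ⟨u, hu1, huf, hune, ?_⟩
  ext x
  simp only [Set.mem_setOf_eq, Set.mem_insert_iff, Set.mem_singleton_iff]
  constructor
  · rintro ⟨hx1, hx2⟩
    have hnind := fixed_pair_dep hA hdet hA1 hx2 hv
    rw [LinearIndependent.pair_iff] at hnind
    push_neg at hnind
    obtain ⟨a, b, hab, hne⟩ := hnind
    have ha : a ≠ 0 := by
      intro ha0
      have hb := hne ha0
      rw [ha0, zero_smul, zero_add] at hab
      exact hb ((smul_eq_zero.1 hab).resolve_right hv0)
    have hx : x = (-(b / a)) • v := by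
      have : a • x = -(b • v) := by
        rw [eq_neg_iff_add_eq_zero]; exact hab
      calc x = a⁻¹ • (a • x) := by rw [smul_smul, inv_mul_cancel₀ ha, one_smul]
        _ = a⁻¹ • (-(b • v)) := by rw [this]
        _ = (-(b / a)) • v := by
            rw [smul_neg, smul_smul, ← neg_smul]
            congr 1
            field_simp
    obtain ⟨t, ht⟩ : ∃ t : ℝ, x = t • v := ⟨_, hx⟩
    have ht1 : t * t * (s * s) = 1 := by
      rw [hss]
      rw [ht, smul_dotProduct, dotProduct_smul, smul_eq_mul, smul_eq_mul] at hx1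
      linarith [hx1]
    have hts : (t * s - 1) * (t * s + 1) = 0 := by ring_nf; nlinarith [ht1]
    rcases mul_eq_zero.1 hts with hcase | hcase
    · left
      have htv : t = s⁻¹ := by
        field_simp at hcase ⊢
        linarith
      rw [ht, htv, hudef]
    · right
      have htv : t = -s⁻¹ := by
        field_simp at hcase ⊢
        linarith
      rw [ht, htv, hudef, neg_smul]
  · rintro (rfl | rfl)
    · exact ⟨hu1, huf⟩
    · constructor
      · rw [neg_dotProduct, dotProduct_neg, neg_neg, hu1]
      · rw [Matrix.mulVec_neg, huf]

/-- A set of lattice points with given square norm is finite. -/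
lemma lattice_sphere_finite (b : Module.Basis (Fin 3) ℝ (Fin 3 → ℝ)) (c : ℝ) :
    Set.Finite {y : Fin 3 → ℝ | y ∈ (Submodule.span ℤ (Set.range ⇑b) : Set (Fin 3 → ℝ)) ∧
      dotProduct y y = c} := by
  set S : Set (Fin 3 → ℝ) := ↑(Submodule.span ℤ (Set.range ⇑b)) with hS
  have hdisc : DiscreteTopology (Submodule.span ℤ (Set.range ⇑b)) := inferInstance
  have hdiscS : DiscreteTopology S := hdisc
  have hsubset : {y : Fin 3 → ℝ | y ∈ S ∧ dotProduct y y = c}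
      ⊆ S ∩ Metric.closedBall 0 (Real.sqrt c) := by
    rintro y ⟨hy1, hy2⟩
    refine ⟨hy1, ?_⟩
    rw [Metric.mem_closedBall, dist_zero_right]
    rw [pi_norm_le_iff_of_nonneg (Real.sqrt_nonneg c)]
    intro i
    have h1 : y i * y i ≤ dotProduct y y := by
      have := Finset.single_le_sum (f := fun j => y j * y j)
        (fun j _ => mul_self_nonneg (y j)) (Finset.mem_univ i)
      exact this
    rw [hy2] at h1
    have h2 : |y i| = Real.sqrt (y i * y i) := (Real.sqrt_mul_self_eq_abs _).symm
    rw [Real.norm_eq_abs, h2]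
    exact Real.sqrt_le_sqrt h1
  have hclosed : IsClosed S := by
    have : DiscreteTopology (Submodule.span ℤ (Set.range ⇑b)).toAddSubgroup := hdisc
    exact AddSubgroup.isClosed_of_discrete (H := (Submodule.span ℤ (Set.range ⇑b)).toAddSubgroup)
  have hcpt : IsCompact (S ∩ Metric.closedBall 0 (Real.sqrt c)) :=
    (isCompact_closedBall _ _).inter_left hclosed
  have hdisc2 : DiscreteTopology (S ∩ Metric.closedBall 0 (Real.sqrt c) : Set (Fin 3 → ℝ)) :=
    DiscreteTopology.of_subset hdiscS Set.inter_subset_left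
  exact (hcpt.finite (isDiscrete_iff_discreteTopology.mpr hdisc2)).subset hsubset

/-- A point group is finite. -/
lemma H_finite (L : AddSubgroup (Fin 3 → ℝ)) (hL : IsLattice L)
    (H : Subgroup OG)
    (hHL : ∀ h ∈ H, (fun v => Matrix.mulVec ((h : Matrix (Fin 3) (Fin 3) ℝ)) v) ''
      (L : Set (Fin 3 → ℝ)) = (L : Set (Fin 3 → ℝ))) : Finite H := by
  obtain ⟨b, hb⟩ := hL
  set K : Fin 3 → Set (Fin 3 → ℝ) := fun i =>
    {y : Fin 3 → ℝ | y ∈ (Submodule.span ℤ (Set.range ⇑b) : Set (Fin 3 → ℝ)) ∧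
      dotProduct y y = dotProduct (b i) (b i)} with hK
  have hKfin : ∀ i, (K i).Finite := fun i => lattice_sphere_finite b _
  have hbL : ∀ i, b i ∈ (L : Set (Fin 3 → ℝ)) := by
    intro i
    rw [hb]
    exact Submodule.subset_span (Set.mem_range_self i)
  have hmem : ∀ h : H, ∀ i, ((h : OG) :
      Matrix (Fin 3) (Fin 3) ℝ).mulVec (b i) ∈ K i := by
    intro h i
    constructor
    · have himg := hHL h h.2
      have : ((h : OG) :
          Matrix (Fin 3) (Fin 3) ℝ).mulVec (b i) ∈ (L : Set (Fin 3 → ℝ)) := by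
        rw [← himg]
        exact ⟨b i, hbL i, rfl⟩
      rwa [hb] at this
    · exact dot_mulVec_mulVec (orth_tmul _) _ _
  have hinj : Function.Injective (fun h : H => fun i : Fin 3 =>
      (⟨((h : OG) :
        Matrix (Fin 3) (Fin 3) ℝ).mulVec (b i), hmem h i⟩ : (K i))) := by
    intro g h hgh
    have heq : ∀ i, ((g : OG) :
        Matrix (Fin 3) (Fin 3) ℝ).mulVec (b i)
        = ((h : OG) :
        Matrix (Fin 3) (Fin 3) ℝ).mulVec (b i) := by
      intro i
      have := congrFun hgh i
      exact Subtype.ext_iff.1 this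
    have hlin : Matrix.toLin' ((g : OG) :
        Matrix (Fin 3) (Fin 3) ℝ) = Matrix.toLin' ((h : OG) :
        Matrix (Fin 3) (Fin 3) ℝ) := by
      apply b.ext
      intro i
      rw [Matrix.toLin'_apply, Matrix.toLin'_apply]
      exact heq i
    have hmatrix : ((g : OG) : Matrix (Fin 3) (Fin 3) ℝ)
        = ((h : OG) : Matrix (Fin 3) (Fin 3) ℝ) := by
      calc ((g : OG) : Matrix (Fin 3) (Fin 3) ℝ)
          = LinearMap.toMatrix' (Matrix.toLin' _) := (LinearMap.toMatrix'_toLin' _).symm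
        _ = LinearMap.toMatrix' (Matrix.toLin' ((h : OG) :
            Matrix (Fin 3) (Fin 3) ℝ)) := by rw [hlin]
        _ = _ := LinearMap.toMatrix'_toLin' _
    exact Subtype.ext (Subtype.ext hmatrix)
  have : ∀ i, Finite (K i) := fun i => (hKfin i).to_subtype
  have : Finite (∀ i : Fin 3, K i) := Pi.finite
  exact Finite.of_injective _ hinj

noncomputable instance actSMul (H : Subgroup OG) : SMul H (Fin 3 → ℝ) :=
  ⟨fun h v => (((h : OG) : Matrix (Fin 3) (Fin 3) ℝ)).mulVec v⟩

lemma hg_smul_def {H : Subgroup OG} (h : H) (v : Fin 3 → ℝ) :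
    h • v = (((h : OG) : Matrix (Fin 3) (Fin 3) ℝ)).mulVec v := rfl

noncomputable instance actMulAction (H : Subgroup OG) : MulAction H (Fin 3 → ℝ) where
  one_smul v := by
    rw [hg_smul_def]
    norm_num [Matrix.one_mulVec]
  mul_smul g h v := by
    rw [hg_smul_def, hg_smul_def, hg_smul_def]
    norm_num [Matrix.mulVec_mulVec]

end PoleCount

open Matrix PoleCount in
/-- Let `H ≤ SO(3)` be a nontrivial point group.  Then, summing over a
set `T` of representatives of the `H`-orbits on the set of pole vectors of `H`, one has
`2 - 2/|H| = ∑_{v ∈ T} (1 - 1/|H_v|)`. -/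
theorem pole_orbit_formula (L : AddSubgroup (Fin 3 → ℝ)) (hL : IsLattice L)
    (H : Subgroup (Matrix.orthogonalGroup (Fin 3) ℝ))
    (hHL : ∀ h ∈ H, (fun v => Matrix.mulVec ((h : Matrix (Fin 3) (Fin 3) ℝ)) v) ''
      (L : Set (Fin 3 → ℝ)) = (L : Set (Fin 3 → ℝ)))
    (hSO : ∀ h ∈ H, ((h : Matrix (Fin 3) (Fin 3) ℝ)).det = 1)
    (hne : H ≠ ⊥)
    (T : Finset (Fin 3 → ℝ))
    (hT : ∀ v ∈ T, IsPoleVector H v)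
    (hrep : ∀ p : Fin 3 → ℝ, IsPoleVector H p → ∃! v, v ∈ T ∧ SameOrbit H v p) :
    2 - 2 / (Nat.card H : ℝ) = ∑ v ∈ T, (1 - 1 / (stabOrder H v : ℝ)) := by
  classical
  haveI hHfin : Finite H := H_finite L hL H hHL
  -- H as a finset
  have hHsetfin : (H : Set OG).Finite := (H : Set OG).toFinite
  set Hf : Finset OG := hHsetfin.toFinset with hHfdef
  have hmemHf : ∀ g : OG, g ∈ Hf ↔ g ∈ H := fun g => Set.Finite.mem_toFinset _
  have h1Hf : (1 : OG) ∈ Hf := (hmemHf 1).2 H.one_mem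
  set n := Nat.card H with hn
  have hHfcard : Hf.card = n := by
    rw [hn, show (Nat.card H : ℕ) = Nat.card (H : Set OG) from rfl,
      Nat.card_coe_set_eq, Set.ncard_eq_toFinset_card _ hHsetfin]
  have hnpos : 0 < n := hn ▸ Nat.card_pos
  -- matrix of a nontrivial element is not 1
  have hcoe_ne : ∀ g : OG, g ≠ 1 → ((g : Matrix (Fin 3) (Fin 3) ℝ)) ≠ 1 := by
    intro g hg hc
    apply hg
    exact Subtype.coe_injective (by simp [hc])
  -- the set of pole vectors is finite
  set P : Set (Fin 3 → ℝ) := {p | IsPoleVector H p} with hPdef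
  have hPfin : P.Finite := by
    have hsub : P ⊆ ⋃ g ∈ Hf.erase 1,
        {x : Fin 3 → ℝ | dotProduct x x = 1 ∧
          (g : Matrix (Fin 3) (Fin 3) ℝ).mulVec x = x} := by
      rintro p ⟨hp1, g, hgH, hg1, hgfix⟩
      exact Set.mem_biUnion (Finset.mem_coe.2 (Finset.mem_erase.2 ⟨hg1, (hmemHf g).2 hgH⟩))
        ⟨hp1, hgfix⟩
    refine Set.Finite.subset (Set.Finite.biUnion (Hf.erase 1).finite_toSet
      (fun g hg => ?_)) hsub
    obtain ⟨u, _, _, _, hset⟩ := fix_set_eq (orth_tmul g)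
      (hSO g ((hmemHf g).1 (Finset.mem_of_mem_erase hg)))
      (hcoe_ne g (Finset.ne_of_mem_erase hg))
    rw [hset]
    exact (Set.finite_singleton _).insert _
  set Pf : Finset (Fin 3 → ℝ) := hPfin.toFinset with hPfdef
  have hmemPf : ∀ p, p ∈ Pf ↔ IsPoleVector H p := fun p => Set.Finite.mem_toFinset _
  -- the fiber over each nontrivial g has exactly two elements
  have hfiber : ∀ g : OG, g ∈ H → g ≠ 1 →
      (Pf.filter (fun p => (g : Matrix (Fin 3) (Fin 3) ℝ).mulVec p = p)).card = 2 := by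
    intro g hgH hg1
    obtain ⟨u, hu1, huf, hune, hset⟩ :=
      fix_set_eq (orth_tmul g) (hSO g hgH) (hcoe_ne g hg1)
    have heq : Pf.filter (fun p => (g : Matrix (Fin 3) (Fin 3) ℝ).mulVec p = p)
        = {u, -u} := by
      ext p
      simp only [Finset.mem_filter, hmemPf, Finset.mem_insert, Finset.mem_singleton]
      constructor
      · rintro ⟨hp, hfix⟩
        have hmem : p ∈ ({u, -u} : Set (Fin 3 → ℝ)) := by
          rw [← hset]; exact ⟨hp.1, hfix⟩
        simpa using hmem
      · intro hp
        have hp' : p ∈ {x : Fin 3 → ℝ | dotProduct x x = 1 ∧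
            (g : Matrix (Fin 3) (Fin 3) ℝ).mulVec x = x} := by
          rw [hset]; simpa using hp
        exact ⟨⟨hp'.1, g, hgH, hg1, hp'.2⟩, hp'.2⟩
    rw [heq, Finset.card_insert_of_notMem (by simpa using hune), Finset.card_singleton]
  -- the stabilizer order as a finset cardinality
  have hstab : ∀ p, stabOrder H p
      = (Hf.filter (fun g : OG => (g : Matrix (Fin 3) (Fin 3) ℝ).mulVec p = p)).card := by
    intro p
    have hseteq : {g : OG | g ∈ H ∧ (g : Matrix (Fin 3) (Fin 3) ℝ).mulVec p = p}
        = ↑(Hf.filter (fun g : OG => (g : Matrix (Fin 3) (Fin 3) ℝ).mulVec p = p)) := by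
      ext g
      simp [hmemHf]
    calc stabOrder H p
        = Nat.card {g : OG | g ∈ H ∧ (g : Matrix (Fin 3) (Fin 3) ℝ).mulVec p = p} := rfl
      _ = Set.ncard {g : OG | g ∈ H ∧ (g : Matrix (Fin 3) (Fin 3) ℝ).mulVec p = p} :=
          Nat.card_coe_set_eq _
      _ = _ := by rw [hseteq, Set.ncard_coe_finset]
  have hone_fix : ∀ p : Fin 3 → ℝ,
      ((1 : OG) : Matrix (Fin 3) (Fin 3) ℝ).mulVec p = p := by
    intro p
    have : ((1 : OG) : Matrix (Fin 3) (Fin 3) ℝ) = 1 := rfl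
    rw [this, Matrix.one_mulVec]
  have hstab_pos : ∀ p, 1 ≤ stabOrder H p := by
    intro p
    rw [hstab]
    refine Finset.card_pos.2 ⟨1, Finset.mem_filter.2 ⟨h1Hf, hone_fix p⟩⟩
  -- double counting
  have hcount1 : ∑ g ∈ Hf.erase 1,
      (Pf.filter (fun p => (g : Matrix (Fin 3) (Fin 3) ℝ).mulVec p = p)).card
      = 2 * (n - 1) := by
    rw [Finset.sum_congr rfl (fun g hg => hfiber g
      ((hmemHf g).1 (Finset.mem_of_mem_erase hg)) (Finset.ne_of_mem_erase hg))]
    rw [Finset.sum_const, Finset.card_erase_of_mem h1Hf, hHfcard, smul_eq_mul, mul_comm]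
  have hswap : ∑ g ∈ Hf.erase 1,
      (Pf.filter (fun p => (g : Matrix (Fin 3) (Fin 3) ℝ).mulVec p = p)).card
      = ∑ p ∈ Pf,
      ((Hf.erase 1).filter (fun g : OG => (g : Matrix (Fin 3) (Fin 3) ℝ).mulVec p = p)).card := by
    simp_rw [Finset.card_filter]
    rw [Finset.sum_comm]
  have hstab_erase : ∀ p,
      ((Hf.erase 1).filter (fun g : OG => (g : Matrix (Fin 3) (Fin 3) ℝ).mulVec p = p)).card
      = stabOrder H p - 1 := by
    intro p
    rw [hstab, Finset.filter_erase,
      Finset.card_erase_of_mem (Finset.mem_filter.2 ⟨h1Hf, hone_fix p⟩)]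
  -- orbits
  have horbfin : ∀ v : Fin 3 → ℝ, (MulAction.orbit H v).Finite :=
    fun v => Set.finite_range _
  set Of : (Fin 3 → ℝ) → Finset (Fin 3 → ℝ) := fun v => (horbfin v).toFinset with hOfdef
  have hmemOf : ∀ v w, w ∈ Of v ↔ ∃ g : H, g • v = w := by
    intro v w
    rw [hOfdef]
    simp only [Set.Finite.mem_toFinset]
    exact Iff.rfl
  have hsame_of : ∀ v w, SameOrbit H v w ↔ w ∈ Of v := by
    intro v w
    rw [hmemOf]
    constructor
    · rintro ⟨g, hgH, hfix⟩
      exact ⟨⟨g, hgH⟩, hfix⟩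
    · rintro ⟨g, rfl⟩
      exact ⟨g, g.2, rfl⟩
  -- every element of an orbit of a pole is a pole
  have hpole_orbit : ∀ v, IsPoleVector H v → ∀ g : H, IsPoleVector H (g • v) := by
    rintro v ⟨hv1, h, hhH, hh1, hhfix⟩ g
    set h' : H := ⟨h, hhH⟩ with hh'def
    have hfix' : h' • v = v := hhfix
    refine ⟨?_, ↑(g * h' * g⁻¹), (g * h' * g⁻¹).2, ?_, ?_⟩
    · rw [hg_smul_def]
      rw [dot_mulVec_mulVec (orth_tmul _) v v]
      exact hv1
    · intro hc
      apply hh1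
      have hgh : g * h' * g⁻¹ = 1 := Subtype.coe_injective hc
      have : h' = 1 := by
        have h9 : h' = g⁻¹ * (g * h' * g⁻¹) * g := by group
        rw [hgh] at h9
        simpa using h9
      have := congrArg (fun x : H => (x : OG)) this
      exact this
    · show ((↑(g * h' * g⁻¹) : OG) : Matrix (Fin 3) (Fin 3) ℝ).mulVec (g • v) = g • v
      have : (g * h' * g⁻¹) • (g • v) = g • v := by
        rw [smul_smul]
        have h8 : g * h' * g⁻¹ * g = g * h' := by group
        rw [h8, ← smul_smul, hfix']
      exact this
  -- the pole set is partitioned by the orbits of T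
  have hcover : Pf = T.biUnion Of := by
    ext p
    rw [hmemPf]
    constructor
    · intro hp
      obtain ⟨v, ⟨hvT, hvorb⟩, _⟩ := hrep p hp
      exact Finset.mem_biUnion.2 ⟨v, hvT, (hsame_of v p).1 hvorb⟩
    · intro hp
      obtain ⟨v, hvT, hpv⟩ := Finset.mem_biUnion.1 hp
      obtain ⟨g, rfl⟩ := (hmemOf v p).1 hpv
      exact hpole_orbit v (hT v hvT) g
  have hdisj : (T : Set (Fin 3 → ℝ)).PairwiseDisjoint Of := by
    intro v hv v' hv' hvv'
    show Disjoint (Of v) (Of v')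
    rw [Finset.disjoint_left]
    intro p hpv hpv'
    apply hvv'
    obtain ⟨g, rfl⟩ := (hmemOf v p).1 hpv
    have hpole : IsPoleVector H (g • v) := hpole_orbit v (hT v hv) g
    obtain ⟨w, -, hwuniq⟩ := hrep (g • v) hpole
    have h1 : v = w := hwuniq v ⟨hv, (hsame_of v _).2 hpv⟩
    have h2 : v' = w := hwuniq v' ⟨hv', (hsame_of v' _).2 hpv'⟩
    rw [h1, h2]
  -- the stabilizer order is constant along an orbit
  have hconst : ∀ v, ∀ p ∈ Of v, stabOrder H p = stabOrder H v := by
    intro v p hp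
    obtain ⟨g, rfl⟩ := (hmemOf v p).1 hp
    rw [hstab, hstab]
    apply Finset.card_bij (fun a _ => (↑g : OG)⁻¹ * a * (↑g : OG))
    · intro a ha
      obtain ⟨haH, hafix⟩ := Finset.mem_filter.1 ha
      refine Finset.mem_filter.2 ⟨(hmemHf _).2
        (mul_mem (mul_mem (inv_mem g.2) ((hmemHf a).1 haH)) g.2), ?_⟩
      set a' : H := ⟨a, (hmemHf a).1 haH⟩ with ha'def
      have hafix' : a' • (g • v) = g • v := hafix
      show ((↑(g⁻¹ * a' * g) : OG) : Matrix (Fin 3) (Fin 3) ℝ).mulVec v = v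
      have : (g⁻¹ * a' * g) • v = v := by
        rw [mul_smul, mul_smul, hafix', inv_smul_smul]
      exact this
    · intro a ha b hb hab
      have := mul_right_cancel hab
      exact mul_left_cancel this
    · intro b hb
      obtain ⟨hbH, hbfix⟩ := Finset.mem_filter.1 hb
      refine ⟨(↑g : OG) * b * (↑g : OG)⁻¹, Finset.mem_filter.2 ⟨(hmemHf _).2
        (mul_mem (mul_mem g.2 ((hmemHf b).1 hbH)) (inv_mem g.2)), ?_⟩, by group⟩
      set b' : H := ⟨b, (hmemHf b).1 hbH⟩ with hb'def
      have hbfix' : b' • v = v := hbfix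
      show ((↑(g * b' * g⁻¹) : OG) : Matrix (Fin 3) (Fin 3) ℝ).mulVec (g • v) = g • v
      have : (g * b' * g⁻¹) • (g • v) = g • v := by
        rw [mul_smul, mul_smul, inv_smul_smul, hbfix']
      exact this
  -- orbit-stabilizer
  have horbstab : ∀ v, (Of v).card * stabOrder H v = n := by
    intro v
    have e := MulAction.orbitProdStabilizerEquivGroup H v
    have hcard := Nat.card_congr e
    rw [Nat.card_prod] at hcard
    have h1 : Nat.card (MulAction.orbit H v) = (Of v).card := by
      rw [Nat.card_coe_set_eq, Set.ncard_eq_toFinset_card _ (horbfin v)]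
    have h2 : Nat.card (MulAction.stabilizer H v) = stabOrder H v := by
      have e2 : {g : OG // g ∈ H ∧ (g : Matrix (Fin 3) (Fin 3) ℝ).mulVec v = v}
          ≃ MulAction.stabilizer H v :=
        { toFun := fun y => ⟨⟨y.1, y.2.1⟩, by
            rw [MulAction.mem_stabilizer_iff]
            exact y.2.2⟩
          invFun := fun x => ⟨((x : H) : OG), (x : H).2, by
            have h9 := MulAction.mem_stabilizer_iff.1 x.2
            exact h9⟩
          left_inv := fun y => rfl
          right_inv := fun x => rfl }
      exact (Nat.card_congr e2).symm
    rw [h1, h2] at hcard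
    exact hcard
  -- the key natural number identity
  have hkey : 2 * (n - 1) = ∑ v ∈ T, (Of v).card * (stabOrder H v - 1) := by
    rw [← hcount1, hswap]
    rw [Finset.sum_congr rfl (fun p _ => hstab_erase p)]
    rw [hcover, Finset.sum_biUnion hdisj]
    refine Finset.sum_congr rfl (fun v hv => ?_)
    rw [Finset.sum_congr rfl (fun p hp => by rw [hconst v p hp]), Finset.sum_const,
      smul_eq_mul]
  -- pass to the reals
  have hn0 : (n : ℝ) ≠ 0 := Nat.cast_ne_zero.2 hnpos.ne'
  have hterm : ∀ v ∈ T, (1 : ℝ) - 1 / (stabOrder H v : ℝ)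
      = ((Of v).card * (stabOrder H v - 1) : ℕ) / (n : ℝ) := by
    intro v hv
    have hs1 : 1 ≤ stabOrder H v := hstab_pos v
    have hos : (Of v).card * stabOrder H v = n := horbstab v
    have hspos : (0 : ℝ) < (stabOrder H v : ℝ) := by exact_mod_cast hs1
    have hcast : (((Of v).card * (stabOrder H v - 1) : ℕ) : ℝ)
        = ((Of v).card : ℝ) * ((stabOrder H v : ℝ) - 1) := by
      push_cast [Nat.cast_sub hs1]
      ring
    have hncast : ((Of v).card : ℝ) * (stabOrder H v : ℝ) = (n : ℝ) := by
      exact_mod_cast congrArg (Nat.cast : ℕ → ℝ) hos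
    rw [hcast]
    field_simp
    nlinarith [hncast]
  rw [Finset.sum_congr rfl hterm, ← Finset.sum_div, ← Nat.cast_sum, ← hkey]
  have hn1 : 1 ≤ n := hnpos
  have : ((2 * (n - 1) : ℕ) : ℝ) = 2 * ((n : ℝ) - 1) := by
    push_cast [Nat.cast_sub hn1]
    ring
  rw [this]
  field_simp
end

section
/- Let H be a point group acting on a lattice L in ℝ³, let h ∈ H ∩ SO(3) with h ≠ 1, and let ℓ = {v ∈ ℝ³ : h·v = v} be the (one-dimensional) line fixed by h. Then ℓ contains a non-zero element of L. -/
/-- Let `H` be a point group acting on a lattice `L` in `ℝ³`, let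
`h ∈ H ∩ SO(3)` with `h ≠ 1`, and let `ℓ = {v : h · v = v}` be the line fixed by `h`.
Then `ℓ` contains a non-zero element of `L`. -/
theorem axis_meets_lattice (L : AddSubgroup (Fin 3 → ℝ)) (hL : IsLattice L)
    (H : Subgroup (Matrix.orthogonalGroup (Fin 3) ℝ))
    (hHL : ∀ h ∈ H, (fun v => Matrix.mulVec ((h : Matrix (Fin 3) (Fin 3) ℝ)) v) ''
      (L : Set (Fin 3 → ℝ)) = (L : Set (Fin 3 → ℝ)))
    (h : Matrix.orthogonalGroup (Fin 3) ℝ) (hh : h ∈ H)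
    (hdet : ((h : Matrix (Fin 3) (Fin 3) ℝ)).det = 1) (hne : h ≠ 1) :
    ∃ v : Fin 3 → ℝ, v ∈ L ∧ v ≠ 0 ∧
      Matrix.mulVec ((h : Matrix (Fin 3) (Fin 3) ℝ)) v = v := by
  obtain ⟨b, hb⟩ := hL
  set A : Matrix (Fin 3) (Fin 3) ℝ := (h : Matrix (Fin 3) (Fin 3) ℝ) with hA
  -- A * A.transpose = 1
  have hAA : A * A.transpose = 1 := by
    have := h.prop.2
    simpa [Matrix.star_eq_conjTranspose] using this
  -- det (A - 1) = 0
  have hdet0 : (A - 1).det = 0 := by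
    have key : (A - 1).det = -(A - 1).det := by
      calc (A - 1).det = (A * (1 - A.transpose)).det := by rw [mul_sub, mul_one, hAA]
        _ = (1 - A.transpose).det := by rw [Matrix.det_mul, hdet, one_mul]
        _ = ((1 - A).transpose).det := by rw [Matrix.transpose_sub, Matrix.transpose_one]
        _ = (1 - A).det := Matrix.det_transpose _
        _ = (-(A - 1)).det := by rw [neg_sub]
        _ = -(A - 1).det := by rw [Matrix.det_neg]; norm_num
    linarith
  -- the linear map
  set f : (Fin 3 → ℝ) →ₗ[ℝ] (Fin 3 → ℝ) := Matrix.toLin' A with hf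
  -- f maps L into L; in particular basis vectors go to the ℤ-span
  have hbi_mem : ∀ i, f (b i) ∈ Submodule.span ℤ (Set.range ⇑b) := by
    intro i
    have hbiL : b i ∈ (L : Set (Fin 3 → ℝ)) := by
      rw [hb]; exact Submodule.subset_span (Set.mem_range_self i)
    have : f (b i) ∈ (fun v => Matrix.mulVec A v) '' (L : Set (Fin 3 → ℝ)) :=
      ⟨b i, hbiL, rfl⟩
    rw [hHL h hh] at this
    rw [hb] at this
    exact this
  -- integer coefficients
  have hcoef : ∀ i j, ∃ n : ℤ, (n : ℝ) = b.repr (f (b i)) j := by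
    intro i j
    exact (b.mem_span_iff_repr_mem ℤ _).mp (hbi_mem i) j
  choose N hN using fun i j => hcoef i j
  set M : Matrix (Fin 3) (Fin 3) ℤ := fun j i => N i j with hM
  have hMat : LinearMap.toMatrix b b f = M.map (Int.cast : ℤ → ℝ) := by
    ext j i
    rw [LinearMap.toMatrix_apply, Matrix.map_apply, hM, hN]
  -- det (M - 1) = 0 over ℤ
  have hdetM : (M - 1).det = 0 := by
    have h1 : ((M - 1).map (Int.cast : ℤ → ℝ)).det = 0 := by
      have e1 : (M - 1).map (Int.cast : ℤ → ℝ) = M.map Int.cast - 1 := by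
        ext i j
        by_cases hij : i = j <;>
          simp [Matrix.map_apply, Matrix.one_apply, hij]
      rw [e1, ← hMat]
      have e2 : LinearMap.toMatrix b b f - 1 = LinearMap.toMatrix b b (f - LinearMap.id) := by
        simp [map_sub]
      rw [e2]
      have e3 : LinearMap.det (f - LinearMap.id) = (A - 1).det := by
        have : f - LinearMap.id = Matrix.toLin' (A - 1) := by
          rw [map_sub, hf]
          congr 1
          simp [Matrix.toLin'_one]
        rw [this, LinearMap.det_toLin']
      calc (LinearMap.toMatrix b b (f - LinearMap.id)).det
          = LinearMap.det (f - LinearMap.id) := LinearMap.det_toMatrix b _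
        _ = (A - 1).det := e3
        _ = 0 := hdet0
    have h2 : (((M - 1).det : ℤ) : ℝ) = 0 := by
      rw [show (((M - 1).det : ℤ) : ℝ) = (Int.castRingHom ℝ) ((M - 1).det) from rfl,
        RingHom.map_det]
      exact h1
    exact_mod_cast h2
  -- nonzero integer kernel vector
  obtain ⟨c, hc0, hcker⟩ := Matrix.exists_mulVec_eq_zero_iff.mpr hdetM
  have hMc : M.mulVec c = c := by
    have := hcker
    rw [Matrix.sub_mulVec, Matrix.one_mulVec, sub_eq_zero] at this
    exact this
  -- the fixed lattice vector
  set cr : Fin 3 → ℝ := fun i => (c i : ℝ) with hcr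
  refine ⟨b.equivFun.symm cr, ?_, ?_, ?_⟩
  · rw [← SetLike.mem_coe, hb, b.equivFun_symm_apply]
    refine Submodule.sum_mem _ fun i _ => ?_
    have hsm : cr i • b i = c i • b i := Int.cast_smul_eq_zsmul ℝ (c i) (b i)
    rw [hsm]
    exact Submodule.smul_mem _ _ (Submodule.subset_span (Set.mem_range_self i))
  · intro hzero
    apply hc0
    have hcr0 : cr = 0 := by
      have h0 : b.equivFun.symm cr = b.equivFun.symm 0 := by rw [hzero, map_zero]
      exact b.equivFun.symm.injective h0
    funext i
    have hi : (c i : ℝ) = 0 := congrFun hcr0 i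
    exact_mod_cast hi
  · -- f fixes v
    have : f = Matrix.toLin b b (M.map (Int.cast : ℤ → ℝ)) := by
      rw [← hMat, Matrix.toLin_toMatrix]
    have happ : Matrix.mulVec A (b.equivFun.symm cr) = f (b.equivFun.symm cr) := rfl
    rw [happ, this, Matrix.toLin_apply]
    have hrep : ⇑(b.repr (b.equivFun.symm cr)) = cr := by
      ext i
      rw [← Module.Basis.equivFun_apply, LinearEquiv.apply_symm_apply]
    have hmv : (M.map (Int.cast : ℤ → ℝ)).mulVec (b.repr (b.equivFun.symm cr)) = cr := by
      rw [show ((b.repr (b.equivFun.symm cr)) : Fin 3 → ℝ) = cr from hrep]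
      funext j
      have := congrFun hMc j
      simp only [Matrix.mulVec, dotProduct, Matrix.map_apply, hcr] at *
      push_cast [← this]
      rfl
    rw [hrep] at *
    rw [hmv, ← b.equivFun_symm_apply]
end

section
/- Let H be a point group acting on a lattice L in ℝ³, let h ∈ H ∩ SO(3) with h ≠ 1, and let ℓ = {v ∈ ℝ³ : h·v = v} be the line fixed by h. Then the plane P = {v ∈ ℝ³ : v ⊥ ℓ} (the orthogonal complement of ℓ) contains a non-zero element of L. -/
/-- Let `H` be a point group acting on a lattice `L` in `ℝ³`, let
`h ∈ H ∩ SO(3)` with `h ≠ 1`, and let `ℓ = {v : h · v = v}` be the line fixed by `h`.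
Then the plane `P = {v : v ⊥ ℓ}` (the orthogonal complement of `ℓ`) contains a non-zero
element of `L`. -/
theorem orthogonal_plane_meets_lattice (L : AddSubgroup (Fin 3 → ℝ)) (hL : IsLattice L)
    (H : Subgroup (Matrix.orthogonalGroup (Fin 3) ℝ))
    (hHL : ∀ h ∈ H, (fun v => Matrix.mulVec ((h : Matrix (Fin 3) (Fin 3) ℝ)) v) ''
      (L : Set (Fin 3 → ℝ)) = (L : Set (Fin 3 → ℝ)))
    (h : Matrix.orthogonalGroup (Fin 3) ℝ) (hh : h ∈ H)
    (hdet : ((h : Matrix (Fin 3) (Fin 3) ℝ)).det = 1) (hne : h ≠ 1) :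
    ∃ v : Fin 3 → ℝ, v ∈ L ∧ v ≠ 0 ∧
      ∀ w : Fin 3 → ℝ, Matrix.mulVec ((h : Matrix (Fin 3) (Fin 3) ℝ)) w = w →
        dotProduct v w = 0 := by
  classical
  obtain ⟨b, hb⟩ := hL
  set M : Matrix (Fin 3) (Fin 3) ℝ := (h : Matrix (Fin 3) (Fin 3) ℝ) with hM
  -- basis vectors lie in L
  have hbL : ∀ i, b i ∈ L := by
    intro i
    have : b i ∈ (↑(Submodule.span ℤ (Set.range ⇑b)) : Set (Fin 3 → ℝ)) :=
      Submodule.subset_span (Set.mem_range_self i)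
    have := hb ▸ this
    exact this
  -- h maps L into L
  have hmap : ∀ x ∈ L, M.mulVec x ∈ L := by
    intro x hx
    have := hHL h hh
    have hx' : M.mulVec x ∈ (fun v => M.mulVec v) '' (L : Set (Fin 3 → ℝ)) :=
      ⟨x, hx, rfl⟩
    rw [this] at hx'
    exact hx'
  -- some basis vector is moved
  have hmove : ∃ i, M.mulVec (b i) ≠ b i := by
    by_contra hc
    push_neg at hc
    apply hne
    have hM1 : M = 1 := by
      apply Matrix.toLin'.injective
      apply b.ext
      intro i
      simp [Matrix.toLin'_apply, hc i]
    exact Subtype.ext hM1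
  obtain ⟨i, hi⟩ := hmove
  refine ⟨M.mulVec (b i) - b i, ?_, ?_, ?_⟩
  · exact sub_mem (hmap _ (hbL i)) (hbL i)
  · exact sub_ne_zero.mpr hi
  · intro w hw
    -- orthogonality: M.transpose w = w
    have horth : M.transpose * M = 1 := by
      have := h.2.1
      simpa [Matrix.star_eq_conjTranspose, Matrix.conjTranspose_eq_transpose_of_trivial] using this
    have hTw : M.transpose.mulVec w = w := by
      calc M.transpose.mulVec w = M.transpose.mulVec (M.mulVec w) := by rw [hw]
        _ = (M.transpose * M).mulVec w := Matrix.mulVec_mulVec _ _ _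
        _ = w := by rw [horth, Matrix.one_mulVec]
    have key : dotProduct (M.mulVec (b i)) w = dotProduct (b i) w := by
      rw [dotProduct_comm, Matrix.dotProduct_mulVec, ← Matrix.mulVec_transpose, hTw,
        dotProduct_comm]
    rw [sub_dotProduct, key, sub_self]
end

section
/- Let H be a point group acting on a lattice L in ℝ³, and let h ∈ H be a reflection in a plane P, i.e. h is an orthogonal involution whose fixed subspace {v ∈ ℝ³ : h·v = v} equals the two-dimensional subspace P. Then the additive group L ∩ P is free abelian of rank two (isomorphic to ℤ²). -/
open Submodule Module

/-- Let `H` be a point group acting on a lattice `L` in `ℝ³`, and let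
`h ∈ H` be a reflection in a plane `P`, i.e. `h` is an (orthogonal) involution whose
fixed subspace `{v : h · v = v}` equals the two-dimensional subspace `P`.  Then the
additive group `L ∩ P` is free abelian of rank two (isomorphic to `ℤ²`). -/
theorem reflection_plane_lattice_rank_two (L : AddSubgroup (Fin 3 → ℝ)) (hL : IsLattice L)
    (H : Subgroup (Matrix.orthogonalGroup (Fin 3) ℝ))
    (hHL : ∀ h ∈ H, (fun v => Matrix.mulVec ((h : Matrix (Fin 3) (Fin 3) ℝ)) v) ''
      (L : Set (Fin 3 → ℝ)) = (L : Set (Fin 3 → ℝ)))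
    (h : Matrix.orthogonalGroup (Fin 3) ℝ) (hh : h ∈ H)
    (hinv : h * h = 1) (hne : h ≠ 1)
    (P : Submodule ℝ (Fin 3 → ℝ)) (hP : Module.finrank ℝ P = 2)
    (hfix : {v : Fin 3 → ℝ | Matrix.mulVec ((h : Matrix (Fin 3) (Fin 3) ℝ)) v = v} =
      (P : Set (Fin 3 → ℝ))) :
    Nonempty (↥(L ⊓ P.toAddSubgroup) ≃+ ℤ × ℤ) := by
  classical
  obtain ⟨b, hb⟩ := hL
  set A : Matrix (Fin 3) (Fin 3) ℝ := (h : Matrix (Fin 3) (Fin 3) ℝ) with hA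
  have hA2 : A * A = 1 := by
    have := congrArg (fun x : Matrix.orthogonalGroup (Fin 3) ℝ =>
      (x : Matrix (Fin 3) (Fin 3) ℝ)) hinv
    simpa [hA] using this
  have hmem : ∀ v, v ∈ P ↔ A.mulVec v = v := by
    intro v
    rw [← SetLike.mem_coe, ← hfix]
    rfl
  have hAL : ∀ w ∈ L, A.mulVec w ∈ L := by
    intro w hw
    have := hHL h hh
    rw [← SetLike.mem_coe, ← this]
    exact Set.mem_image_of_mem _ hw
  -- the linear map v ↦ v + A v
  set q : (Fin 3 → ℝ) →ₗ[ℝ] (Fin 3 → ℝ) := Matrix.mulVecLin (1 + A) with hqdef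
  have hq : ∀ v, q v = v + A.mulVec v := by
    intro v
    simp [hqdef, Matrix.add_mulVec, Matrix.one_mulVec]
  have hqP : ∀ v, q v ∈ P := by
    intro v
    rw [hmem, hq, Matrix.mulVec_add, Matrix.mulVec_mulVec, hA2, Matrix.one_mulVec, add_comm]
  set Q : (Fin 3 → ℝ) →ₗ[ℝ] ↥P := q.codRestrict P hqP with hQdef
  -- the sublattice
  set N : Submodule ℤ ↥P := (L.toIntSubmodule).comap ((P.subtype).restrictScalars ℤ) with hN
  have hNmem : ∀ x : ↥P, x ∈ N ↔ (x : Fin 3 → ℝ) ∈ L := fun x => Iff.rfl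
  -- discreteness
  have hdiscL : DiscreteTopology (L : Set (Fin 3 → ℝ)) := by
    rw [hb]
    exact inferInstanceAs (DiscreteTopology (span ℤ (Set.range ⇑b)))
  have hdisc : DiscreteTopology N := by
    exact DiscreteTopology.preimage_of_continuous_injective (L : Set (Fin 3 → ℝ))
      continuous_subtype_val Subtype.val_injective
  -- spanning
  have hspanL : span ℝ (L : Set (Fin 3 → ℝ)) = ⊤ := by
    rw [eq_top_iff, ← b.span_eq]
    refine span_le.mpr fun v hv => subset_span ?_
    rw [hb]
    exact Submodule.subset_span hv
  have hzl : IsZLattice ℝ N := by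
    refine ⟨?_⟩
    rw [eq_top_iff]
    rintro x -
    have hx : (x : Fin 3 → ℝ) ∈ span ℝ (L : Set (Fin 3 → ℝ)) := by
      rw [hspanL]; trivial
    have hQx : Q (x : Fin 3 → ℝ) ∈ span ℝ (N : Set ↥P) := by
      have h1 : Q (x : Fin 3 → ℝ) ∈ Submodule.map Q (span ℝ (L : Set (Fin 3 → ℝ))) :=
        Submodule.mem_map_of_mem hx
      rw [Submodule.map_span] at h1
      refine span_le.mpr ?_ (h1 : _)
      rintro y ⟨w, hw, rfl⟩
      refine subset_span ?_
      rw [SetLike.mem_coe, hNmem]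
      have : (Q w : Fin 3 → ℝ) = w + A.mulVec w := hq w
      rw [this]
      exact L.add_mem hw (hAL w hw)
    have hx2 : x = (2⁻¹ : ℝ) • Q (x : Fin 3 → ℝ) := by
      refine Subtype.ext ?_
      have : (Q (x : Fin 3 → ℝ) : Fin 3 → ℝ) = (x : Fin 3 → ℝ) + A.mulVec x := hq x
      rw [SetLike.val_smul, this, (hmem _).mp x.2, ← two_smul ℝ, smul_smul]
      norm_num
    rw [hx2]
    exact Submodule.smul_mem _ _ hQx
  -- rank and freeness
  have hfree : Module.Free ℤ ↥N := ZLattice.module_free ℝ N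
  have hfin : Module.Finite ℤ ↥N := ZLattice.module_finite ℝ N
  have hrank : finrank ℤ ↥N = 2 := by
    rw [ZLattice.rank ℝ N, hP]
  -- build the equivalences
  let b₀ := Module.Free.chooseBasis ℤ ↥N
  have hcard : Fintype.card (Module.Free.ChooseBasisIndex ℤ ↥N) = 2 := by
    rw [← Module.finrank_eq_card_chooseBasisIndex, hrank]
  let e : Module.Free.ChooseBasisIndex ℤ ↥N ≃ Fin 2 :=
    Fintype.equivFinOfCardEq hcard
  let e1 : ↥N ≃ₗ[ℤ] (Fin 2 → ℤ) := (b₀.reindex e).equivFun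
  let e2 : (Fin 2 → ℤ) ≃+ ℤ × ℤ := ⟨piFinTwoEquiv fun _ => ℤ, fun _ _ => rfl⟩
  let e0 : ↥(L ⊓ P.toAddSubgroup) ≃+ ↥N :=
    { toFun := fun x => ⟨⟨x.1, x.2.2⟩, x.2.1⟩
      invFun := fun x => ⟨(x : ↥P), x.2, ((x : ↥P)).2⟩
      left_inv := fun x => rfl
      right_inv := fun x => rfl
      map_add' := fun x y => rfl }
  exact ⟨e0.trans (e1.toAddEquiv.trans e2)⟩
end

section
/- Let v₁ = (1,1,1), v₂ = (1,−1,0), v₃ = (0,−1,1) and let L_P = ℤ·v₁ + ℤ·v₂ + ℤ·v₃ (the prismatic lattice). Let L be an additive subgroup of ℝ³ with L_P ⊆ L such that ℤ·v₁ is full in L (L ∩ ℝ·v₁ = ℤ·v₁) and ℤ·v₂ + ℤ·v₃ is full in L (L ∩ (ℝ·v₂ + ℝ·v₃) = ℤ·v₂ + ℤ·v₃). Suppose L is mapped onto itself both by the 120-degree rotation about the line x = y = z (the cyclic coordinate-permutation matrix) and by the reflection across the plane x + y + z = 0 (the matrix (1/3)·[[1,−2,−2],[−2,1,−2],[−2,−2,1]]).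 Then L = L_P. -/
/-- Let `v₁ = (1,1,1)`, `v₂ = (1,-1,0)`, `v₃ = (0,-1,1)` and let
`L_P = ℤ·v₁ + ℤ·v₂ + ℤ·v₃` (the prismatic lattice).  Let `L` be an additive subgroup of
`ℝ³` with `L_P ⊆ L` such that `ℤ·v₁` is full in `L` and `ℤ·v₂ + ℤ·v₃` is full in `L`.
If `L` is mapped onto itself both by the `120`-degree rotation about the line `x = y = z`
(the cyclic coordinate-permutation matrix) and by the reflection across the plane
`x + y + z = 0` (the matrix `(1/3)·[[1,-2,-2],[-2,1,-2],[-2,-2,1]]`), then `L = L_P`. -/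
theorem prismatic_lattice_rigidity (L : AddSubgroup (Fin 3 → ℝ))
    (hsub : AddSubgroup.closure
        ({![1, 1, 1], ![1, -1, 0], ![0, -1, 1]} : Set (Fin 3 → ℝ)) ≤ L)
    (hfull1 : ∀ c : ℝ, c • (![1, 1, 1] : Fin 3 → ℝ) ∈ L ↔ ∃ n : ℤ, c = n)
    (hfull23 : ∀ a b : ℝ,
      a • (![1, -1, 0] : Fin 3 → ℝ) + b • (![0, -1, 1] : Fin 3 → ℝ) ∈ L ↔
        (∃ m : ℤ, a = m) ∧ (∃ n : ℤ, b = n))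
    (hrot : (fun v => Matrix.mulVec
        (!![0, 1, 0; 0, 0, 1; 1, 0, 0] : Matrix (Fin 3) (Fin 3) ℝ) v) ''
      (L : Set (Fin 3 → ℝ)) = (L : Set (Fin 3 → ℝ)))
    (hrefl : (fun v => Matrix.mulVec
        ((1 / 3 : ℝ) • !![1, -2, -2; -2, 1, -2; -2, -2, 1] : Matrix (Fin 3) (Fin 3) ℝ) v) ''
      (L : Set (Fin 3 → ℝ)) = (L : Set (Fin 3 → ℝ))) :
    L = AddSubgroup.closure ({![1, 1, 1], ![1, -1, 0], ![0, -1, 1]} : Set (Fin 3 → ℝ)) := by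

  refine le_antisymm ?_ hsub
  intro w hw
  -- rotation sends members of L to members of L
  have hP : (![w 1, w 2, w 0] : Fin 3 → ℝ) ∈ L := by
    have : Matrix.mulVec (!![0, 1, 0; 0, 0, 1; 1, 0, 0] : Matrix (Fin 3) (Fin 3) ℝ) w
        ∈ (L : Set (Fin 3 → ℝ)) := by
      rw [← hrot]; exact ⟨w, hw, rfl⟩
    have he : Matrix.mulVec (!![0, 1, 0; 0, 0, 1; 1, 0, 0] : Matrix (Fin 3) (Fin 3) ℝ) w
        = ![w 1, w 2, w 0] := by
      funext i; fin_cases i <;>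
        simp [Matrix.mulVec, dotProduct, Fin.sum_univ_three]
    rwa [he] at this
  have hP2 : (![w 2, w 0, w 1] : Fin 3 → ℝ) ∈ L := by
    have h := hP
    have : Matrix.mulVec (!![0, 1, 0; 0, 0, 1; 1, 0, 0] : Matrix (Fin 3) (Fin 3) ℝ)
        (![w 1, w 2, w 0] : Fin 3 → ℝ) ∈ (L : Set (Fin 3 → ℝ)) := by
      rw [← hrot]; exact ⟨_, h, rfl⟩
    have he : Matrix.mulVec (!![0, 1, 0; 0, 0, 1; 1, 0, 0] : Matrix (Fin 3) (Fin 3) ℝ)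
        (![w 1, w 2, w 0] : Fin 3 → ℝ) = ![w 2, w 0, w 1] := by
      funext i; fin_cases i <;>
        simp [Matrix.mulVec, dotProduct, Fin.sum_univ_three]
    rwa [he] at this
  set s : ℝ := w 0 + w 1 + w 2 with hs
  -- s is an integer
  have hsum : s • (![1, 1, 1] : Fin 3 → ℝ) ∈ L := by
    have h := L.add_mem (L.add_mem hw hP) hP2
    have he : w + ![w 1, w 2, w 0] + ![w 2, w 0, w 1]
        = s • (![1, 1, 1] : Fin 3 → ℝ) := by
      funext i; fin_cases i <;> simp [hs, Matrix.vecHead, Matrix.vecTail] <;> ring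
    rwa [he] at h
  obtain ⟨n, hn⟩ := (hfull1 s).mp hsum
  -- reflection
  have hR : (fun i => w i - 2 / 3 * s) ∈ L := by
    have : Matrix.mulVec ((1 / 3 : ℝ) • !![1, -2, -2; -2, 1, -2; -2, -2, 1]
        : Matrix (Fin 3) (Fin 3) ℝ) w ∈ (L : Set (Fin 3 → ℝ)) := by
      rw [← hrefl]; exact ⟨w, hw, rfl⟩
    have he : Matrix.mulVec ((1 / 3 : ℝ) • !![1, -2, -2; -2, 1, -2; -2, -2, 1]
        : Matrix (Fin 3) (Fin 3) ℝ) w = fun i => w i - 2 / 3 * s := by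
      funext i; fin_cases i <;>
        simp [Matrix.mulVec, dotProduct, Fin.sum_univ_three, hs] <;> ring
    rwa [he] at this
  have h2c : ((2 / 3) * s) • (![1, 1, 1] : Fin 3 → ℝ) ∈ L := by
    have h := L.sub_mem hw hR
    have he : w - (fun i => w i - 2 / 3 * s)
        = ((2 / 3) * s) • (![1, 1, 1] : Fin 3 → ℝ) := by
      funext i; fin_cases i <;> simp [Matrix.vecHead, Matrix.vecTail] <;> ring
    rwa [he] at h
  obtain ⟨m, hm⟩ := (hfull1 _).mp h2c
  -- c := s/3 is an integer: c = n - m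
  have hc : s / 3 = ((n - m : ℤ) : ℝ) := by
    push_cast
    rw [← hn, ← hm]; ring
  -- subtract c • v₁
  have hv1 : (![1, 1, 1] : Fin 3 → ℝ) ∈ L :=
    hsub (AddSubgroup.subset_closure (by simp))
  have hcv1 : (s / 3) • (![1, 1, 1] : Fin 3 → ℝ) ∈ L := by
    rw [hc, Int.cast_smul_eq_zsmul]
    exact zsmul_mem hv1 _
  have hab : (w 0 - s / 3) • (![1, -1, 0] : Fin 3 → ℝ)
      + (w 2 - s / 3) • (![0, -1, 1] : Fin 3 → ℝ) ∈ L := by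
    have h := L.sub_mem hw hcv1
    have he : w - (s / 3) • (![1, 1, 1] : Fin 3 → ℝ)
        = (w 0 - s / 3) • (![1, -1, 0] : Fin 3 → ℝ)
          + (w 2 - s / 3) • (![0, -1, 1] : Fin 3 → ℝ) := by
      funext i; fin_cases i <;> simp [hs, Matrix.vecHead, Matrix.vecTail] <;> ring
    rwa [he] at h
  obtain ⟨⟨p, hp⟩, ⟨q, hq⟩⟩ := (hfull23 _ _).mp hab
  -- assemble membership in the closure
  have hv1' : (![1, 1, 1] : Fin 3 → ℝ) ∈ AddSubgroup.closure
      ({![1, 1, 1], ![1, -1, 0], ![0, -1, 1]} : Set (Fin 3 → ℝ)) :=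
    AddSubgroup.subset_closure (by simp)
  have hv2' : (![1, -1, 0] : Fin 3 → ℝ) ∈ AddSubgroup.closure
      ({![1, 1, 1], ![1, -1, 0], ![0, -1, 1]} : Set (Fin 3 → ℝ)) :=
    AddSubgroup.subset_closure (by simp)
  have hv3' : (![0, -1, 1] : Fin 3 → ℝ) ∈ AddSubgroup.closure
      ({![1, 1, 1], ![1, -1, 0], ![0, -1, 1]} : Set (Fin 3 → ℝ)) :=
    AddSubgroup.subset_closure (by simp)
  have hw' : w = (s / 3) • (![1, 1, 1] : Fin 3 → ℝ)
      + (w 0 - s / 3) • (![1, -1, 0] : Fin 3 → ℝ)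
      + (w 2 - s / 3) • (![0, -1, 1] : Fin 3 → ℝ) := by
    funext i; fin_cases i <;> simp [hs, Matrix.vecHead, Matrix.vecTail] <;> ring
  rw [hw', hp, hq, hc, Int.cast_smul_eq_zsmul, Int.cast_smul_eq_zsmul,
    Int.cast_smul_eq_zsmul]
  exact add_mem (add_mem (zsmul_mem hv1' _) (zsmul_mem hv2' _)) (zsmul_mem hv3' _)
end

section
/- Let L be an additive subgroup of ℝ³ with ℤ³ ⊆ L ⊆ (1/2)·ℤ³ such that for each coordinate index i the subgroup ℤ·eᵢ is full in L (that is, L ∩ ℝ·eᵢ = ℤ·eᵢ). Then L is equal to one of the following six subgroups: ℤ³; ℤ³ + ℤ·(1/2,1/2,1/2); ℤ³ + ℤ·(1/2,1/2,0); ℤ³ + ℤ·(1/2,0,1/2); ℤ³ + ℤ·(0,1/2,1/2); or ℤ·(1/2,1/2,0) + ℤ·(1/2,0,1/2) + ℤ·(0,1/2,1/2). -/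
abbrev Zcube : AddSubgroup (Fin 3 → ℝ) :=
  AddSubgroup.closure ({![1, 0, 0], ![0, 1, 0], ![0, 0, 1]} : Set (Fin 3 → ℝ))

lemma int_mem (n : Fin 3 → ℤ) : (fun i => (n i : ℝ)) ∈ Zcube := by
  have h1 : (![1,0,0] : Fin 3 → ℝ) ∈ Zcube := AddSubgroup.subset_closure (by simp)
  have h2 : (![0,1,0] : Fin 3 → ℝ) ∈ Zcube := AddSubgroup.subset_closure (by simp)
  have h3 : (![0,0,1] : Fin 3 → ℝ) ∈ Zcube := AddSubgroup.subset_closure (by simp)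
  have he : (fun i => (n i : ℝ)) = n 0 • ![1,0,0] + n 1 • ![0,1,0] + n 2 • ![0,0,1] := by
    funext i; fin_cases i <;> simp
  rw [he]
  exact add_mem (add_mem (AddSubgroup.zsmul_mem _ h1 _) (AddSubgroup.zsmul_mem _ h2 _))
    (AddSubgroup.zsmul_mem _ h3 _)

lemma decomp (v : Fin 3 → ℝ) (hv : ∀ i : Fin 3, ∃ n : ℤ, 2 * v i = n) :
    ∃ h : Fin 3 → ℝ, v - h ∈ Zcube ∧
      (h = 0 ∨ h = ![1/2,0,0] ∨ h = ![0,1/2,0] ∨ h = ![0,0,1/2] ∨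
       h = ![1/2,1/2,0] ∨ h = ![1/2,0,1/2] ∨ h = ![0,1/2,1/2] ∨ h = ![1/2,1/2,1/2]) := by
  choose m hm using hv
  set b : Fin 3 → Bool := fun i => decide (Odd (m i)) with hb
  refine ⟨fun i => if b i then (1/2 : ℝ) else 0, ?_, ?_⟩
  · have key : ∀ i, ∃ k : ℤ, v i - (if b i then (1/2:ℝ) else 0) = k := by
      intro i
      have h2 : (2:ℝ) * v i = m i := hm i
      by_cases ho : Odd (m i)
      · obtain ⟨c, hc⟩ := ho
        refine ⟨c, ?_⟩
        have hbi : b i = true := by simp only [hb, decide_eq_true_eq]; exact ⟨c, hc⟩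
        rw [hbi]
        have : (m i : ℝ) = 2 * c + 1 := by rw [hc]; push_cast; ring
        simp only [if_true]
        linarith
      · obtain ⟨c, hc⟩ := Int.not_odd_iff_even.mp ho
        refine ⟨c, ?_⟩
        have hbi : b i = false := by simp [hb, ho]
        rw [hbi]
        have : (m i : ℝ) = c + c := by rw [hc]; push_cast; ring
        simp only [if_false, Bool.false_eq_true]
        linarith
    choose k hk using key
    have : (v - fun i => if b i then (1/2:ℝ) else 0) = fun i => (k i : ℝ) := by
      funext i; simpa using hk i
    rw [this]; exact int_mem k
  · rcases hb0 : b 0 <;> rcases hb1 : b 1 <;> rcases hb2 : b 2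
    · left; funext i; fin_cases i <;> simp [hb0, hb1, hb2]
    · right; right; right; left; funext i; fin_cases i <;> simp [hb0, hb1, hb2]
    · right; right; left; funext i; fin_cases i <;> simp [hb0, hb1, hb2]
    · right; right; right; right; right; right; left
      funext i; fin_cases i <;> simp [hb0, hb1, hb2]
    · right; left; funext i; fin_cases i <;> simp [hb0, hb1, hb2]
    · right; right; right; right; right; left; funext i; fin_cases i <;> simp [hb0, hb1, hb2]
    · right; right; right; right; left; funext i; fin_cases i <;> simp [hb0, hb1, hb2]
    · right; right; right; right; right; right; right
      funext i; fin_cases i <;> simp [hb0, hb1, hb2]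

lemma Zcube_le_closure_insert (s : Set (Fin 3 → ℝ))
    (h : ({![1, 0, 0], ![0, 1, 0], ![0, 0, 1]} : Set (Fin 3 → ℝ)) ⊆ s) :
    Zcube ≤ AddSubgroup.closure s :=
  AddSubgroup.closure_mono h

lemma mem_of_sub_mem (L : AddSubgroup (Fin 3 → ℝ)) (hZ : Zcube ≤ L)
    (v h : Fin 3 → ℝ) (hv : v ∈ L) (hsub : v - h ∈ Zcube) : h ∈ L := by
  have : h = v - (v - h) := by ring
  rw [this]; exact sub_mem hv (hZ hsub)

/-- Master inclusion lemma. -/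
lemma L_le (L M : AddSubgroup (Fin 3 → ℝ))
    (hZL : Zcube ≤ L) (hZM : Zcube ≤ M)
    (hhalf : ∀ v ∈ L, ∀ i : Fin 3, ∃ n : ℤ, 2 * v i = n)
    (key : ∀ h : Fin 3 → ℝ, h ∈ L →
      (h = ![1/2,0,0] ∨ h = ![0,1/2,0] ∨ h = ![0,0,1/2] ∨
       h = ![1/2,1/2,0] ∨ h = ![1/2,0,1/2] ∨ h = ![0,1/2,1/2] ∨ h = ![1/2,1/2,1/2]) →
      h ∈ M) : L ≤ M := by
  intro v hv
  obtain ⟨h, hsub, hcases⟩ := decomp v (hhalf v hv)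
  have hhL : h ∈ L := mem_of_sub_mem L hZL v h hv hsub
  have hhM : h ∈ M := by
    rcases hcases with h0 | hr
    · rw [h0]; exact zero_mem M
    · exact key h hhL hr
  have : v = (v - h) + h := by ring
  rw [this]; exact add_mem (hZM hsub) hhM

lemma not_half_e1 (L : AddSubgroup (Fin 3 → ℝ))
    (hfull1 : ∀ c : ℝ, c • (![1, 0, 0] : Fin 3 → ℝ) ∈ L ↔ ∃ n : ℤ, c = n) :
    ![1/2,0,0] ∉ L := by
  intro hmem
  have he : ((1/2 : ℝ)) • (![1, 0, 0] : Fin 3 → ℝ) = ![1/2,0,0] := by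
    funext i; fin_cases i <;> simp
  obtain ⟨n, hn⟩ := (hfull1 (1/2)).mp (he ▸ hmem)
  have h1 : (2 * n : ℤ) = 1 := by
    have : (2 : ℝ) * n = 1 := by rw [← hn]; norm_num
    exact_mod_cast this
  omega

lemma not_half_e2 (L : AddSubgroup (Fin 3 → ℝ))
    (hfull2 : ∀ c : ℝ, c • (![0, 1, 0] : Fin 3 → ℝ) ∈ L ↔ ∃ n : ℤ, c = n) :
    ![0,1/2,0] ∉ L := by
  intro hmem
  have he : ((1/2 : ℝ)) • (![0, 1, 0] : Fin 3 → ℝ) = ![0,1/2,0] := by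
    funext i; fin_cases i <;> simp
  obtain ⟨n, hn⟩ := (hfull2 (1/2)).mp (he ▸ hmem)
  have h1 : (2 * n : ℤ) = 1 := by
    have : (2 : ℝ) * n = 1 := by rw [← hn]; norm_num
    exact_mod_cast this
  omega

lemma not_half_e3 (L : AddSubgroup (Fin 3 → ℝ))
    (hfull3 : ∀ c : ℝ, c • (![0, 0, 1] : Fin 3 → ℝ) ∈ L ↔ ∃ n : ℤ, c = n) :
    ![0,0,1/2] ∉ L := by
  intro hmem
  have he : ((1/2 : ℝ)) • (![0, 0, 1] : Fin 3 → ℝ) = ![0,0,1/2] := by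
    funext i; fin_cases i <;> simp
  obtain ⟨n, hn⟩ := (hfull3 (1/2)).mp (he ▸ hmem)
  have h1 : (2 * n : ℤ) = 1 := by
    have : (2 : ℝ) * n = 1 := by rw [← hn]; norm_num
    exact_mod_cast this
  omega


/-- Let `L` be an additive subgroup of `ℝ³` with
`ℤ³ ⊆ L ⊆ (1/2)·ℤ³` such that for each coordinate index `i` the subgroup `ℤ·eᵢ` is full
in `L` (that is, `L ∩ ℝ·eᵢ = ℤ·eᵢ`).  Then `L` equals one of the following six
subgroups: `ℤ³`; `ℤ³ + ℤ·(1/2,1/2,1/2)`; `ℤ³ + ℤ·(1/2,1/2,0)`; `ℤ³ + ℤ·(1/2,0,1/2)`;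
`ℤ³ + ℤ·(0,1/2,1/2)`; or `ℤ·(1/2,1/2,0) + ℤ·(1/2,0,1/2) + ℤ·(0,1/2,1/2)`. -/
theorem lattice_between_cubic_and_half_cubic (L : AddSubgroup (Fin 3 → ℝ))
    (hZ3 : AddSubgroup.closure
        ({![1, 0, 0], ![0, 1, 0], ![0, 0, 1]} : Set (Fin 3 → ℝ)) ≤ L)
    (hhalf : ∀ v ∈ L, ∀ i : Fin 3, ∃ n : ℤ, 2 * v i = n)
    (hfull1 : ∀ c : ℝ, c • (![1, 0, 0] : Fin 3 → ℝ) ∈ L ↔ ∃ n : ℤ, c = n)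
    (hfull2 : ∀ c : ℝ, c • (![0, 1, 0] : Fin 3 → ℝ) ∈ L ↔ ∃ n : ℤ, c = n)
    (hfull3 : ∀ c : ℝ, c • (![0, 0, 1] : Fin 3 → ℝ) ∈ L ↔ ∃ n : ℤ, c = n) :
    L = AddSubgroup.closure ({![1, 0, 0], ![0, 1, 0], ![0, 0, 1]} : Set (Fin 3 → ℝ)) ∨
    L = AddSubgroup.closure
      ({![1, 0, 0], ![0, 1, 0], ![0, 0, 1], ![1/2, 1/2, 1/2]} : Set (Fin 3 → ℝ)) ∨
    L = AddSubgroup.closure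
      ({![1, 0, 0], ![0, 1, 0], ![0, 0, 1], ![1/2, 1/2, 0]} : Set (Fin 3 → ℝ)) ∨
    L = AddSubgroup.closure
      ({![1, 0, 0], ![0, 1, 0], ![0, 0, 1], ![1/2, 0, 1/2]} : Set (Fin 3 → ℝ)) ∨
    L = AddSubgroup.closure
      ({![1, 0, 0], ![0, 1, 0], ![0, 0, 1], ![0, 1/2, 1/2]} : Set (Fin 3 → ℝ)) ∨
    L = AddSubgroup.closure
      ({![1/2, 1/2, 0], ![1/2, 0, 1/2], ![0, 1/2, 1/2]} : Set (Fin 3 → ℝ)) := by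
  have hZL : Zcube ≤ L := hZ3
  have e1L : (![1,0,0] : Fin 3 → ℝ) ∈ L := hZL (AddSubgroup.subset_closure (by simp))
  have e2L : (![0,1,0] : Fin 3 → ℝ) ∈ L := hZL (AddSubgroup.subset_closure (by simp))
  have e3L : (![0,0,1] : Fin 3 → ℝ) ∈ L := hZL (AddSubgroup.subset_closure (by simp))
  have hne1 := not_half_e1 L hfull1
  have hne2 := not_half_e2 L hfull2
  have hne3 := not_half_e3 L hfull3
  -- derived implications
  have hABC : (![1/2,1/2,0] : Fin 3 → ℝ) ∈ L → (![1/2,0,1/2] : Fin 3 → ℝ) ∈ L →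
      (![0,1/2,1/2] : Fin 3 → ℝ) ∈ L := by
    intro ha hb
    have he : (![0,1/2,1/2] : Fin 3 → ℝ) = ![1/2,1/2,0] + ![1/2,0,1/2] - ![1,0,0] := by
      funext i; fin_cases i <;> norm_num
    rw [he]; exact sub_mem (add_mem ha hb) e1L
  have hACB : (![1/2,1/2,0] : Fin 3 → ℝ) ∈ L → (![0,1/2,1/2] : Fin 3 → ℝ) ∈ L →
      (![1/2,0,1/2] : Fin 3 → ℝ) ∈ L := by
    intro ha hc
    have he : (![1/2,0,1/2] : Fin 3 → ℝ) = ![1/2,1/2,0] + ![0,1/2,1/2] - ![0,1,0] := by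
      funext i; fin_cases i <;> norm_num
    rw [he]; exact sub_mem (add_mem ha hc) e2L
  have hBCA : (![1/2,0,1/2] : Fin 3 → ℝ) ∈ L → (![0,1/2,1/2] : Fin 3 → ℝ) ∈ L →
      (![1/2,1/2,0] : Fin 3 → ℝ) ∈ L := by
    intro hb hc
    have he : (![1/2,1/2,0] : Fin 3 → ℝ) = ![1/2,0,1/2] + ![0,1/2,1/2] - ![0,0,1] := by
      funext i; fin_cases i <;> norm_num
    rw [he]; exact sub_mem (add_mem hb hc) e3L
  have hAD : (![1/2,1/2,0] : Fin 3 → ℝ) ∈ L → (![1/2,1/2,1/2] : Fin 3 → ℝ) ∈ L → False := by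
    intro ha hd
    refine hne3 ?_
    have he : (![0,0,1/2] : Fin 3 → ℝ) = ![1/2,1/2,1/2] - ![1/2,1/2,0] := by
      funext i; fin_cases i <;> norm_num
    rw [he]; exact sub_mem hd ha
  have hBD : (![1/2,0,1/2] : Fin 3 → ℝ) ∈ L → (![1/2,1/2,1/2] : Fin 3 → ℝ) ∈ L → False := by
    intro hb hd
    refine hne2 ?_
    have he : (![0,1/2,0] : Fin 3 → ℝ) = ![1/2,1/2,1/2] - ![1/2,0,1/2] := by
      funext i; fin_cases i <;> norm_num
    rw [he]; exact sub_mem hd hb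
  have hCD : (![0,1/2,1/2] : Fin 3 → ℝ) ∈ L → (![1/2,1/2,1/2] : Fin 3 → ℝ) ∈ L → False := by
    intro hc hd
    refine hne1 ?_
    have he : (![1/2,0,0] : Fin 3 → ℝ) = ![1/2,1/2,1/2] - ![0,1/2,1/2] := by
      funext i; fin_cases i <;> norm_num
    rw [he]; exact sub_mem hd hc
  by_cases hD : (![1/2,1/2,1/2] : Fin 3 → ℝ) ∈ L
  · -- D ∈ L forces A,B,C ∉ L; case 2
    have hA : (![1/2,1/2,0] : Fin 3 → ℝ) ∉ L := fun h => hAD h hD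
    have hB : (![1/2,0,1/2] : Fin 3 → ℝ) ∉ L := fun h => hBD h hD
    have hC : (![0,1/2,1/2] : Fin 3 → ℝ) ∉ L := fun h => hCD h hD
    right; left
    have hZM : Zcube ≤ AddSubgroup.closure
        ({![1, 0, 0], ![0, 1, 0], ![0, 0, 1], ![1/2, 1/2, 1/2]} : Set (Fin 3 → ℝ)) :=
      Zcube_le_closure_insert _ (by intro x hx; simp only [Set.mem_insert_iff, Set.mem_singleton_iff] at hx ⊢; rcases hx with rfl|rfl|rfl <;> simp)
    refine le_antisymm (L_le L _ hZL hZM hhalf ?_) ((AddSubgroup.closure_le _).mpr ?_)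
    · rintro h hhL (rfl|rfl|rfl|rfl|rfl|rfl|rfl) <;>
        first
          | exact absurd hhL hne1
          | exact absurd hhL hne2
          | exact absurd hhL hne3
          | exact absurd hhL hA
          | exact absurd hhL hB
          | exact absurd hhL hC
          | exact AddSubgroup.subset_closure (by simp)
    · intro x hx
      simp only [Set.mem_insert_iff, Set.mem_singleton_iff] at hx
      rcases hx with rfl|rfl|rfl|rfl
      exacts [e1L, e2L, e3L, hD]
  · by_cases hA : (![1/2,1/2,0] : Fin 3 → ℝ) ∈ L
    · by_cases hB : (![1/2,0,1/2] : Fin 3 → ℝ) ∈ L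
      · -- A,B,C ∈ L : case 6
        have hC : (![0,1/2,1/2] : Fin 3 → ℝ) ∈ L := hABC hA hB
        right; right; right; right; right
        have hA' : (![1/2,1/2,0] : Fin 3 → ℝ) ∈ AddSubgroup.closure
            ({![1/2, 1/2, 0], ![1/2, 0, 1/2], ![0, 1/2, 1/2]} : Set (Fin 3 → ℝ)) :=
          AddSubgroup.subset_closure (by simp)
        have hB' : (![1/2,0,1/2] : Fin 3 → ℝ) ∈ AddSubgroup.closure
            ({![1/2, 1/2, 0], ![1/2, 0, 1/2], ![0, 1/2, 1/2]} : Set (Fin 3 → ℝ)) :=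
          AddSubgroup.subset_closure (by simp)
        have hC' : (![0,1/2,1/2] : Fin 3 → ℝ) ∈ AddSubgroup.closure
            ({![1/2, 1/2, 0], ![1/2, 0, 1/2], ![0, 1/2, 1/2]} : Set (Fin 3 → ℝ)) :=
          AddSubgroup.subset_closure (by simp)
        have hZM : Zcube ≤ AddSubgroup.closure
            ({![1/2, 1/2, 0], ![1/2, 0, 1/2], ![0, 1/2, 1/2]} : Set (Fin 3 → ℝ)) := by
          rw [AddSubgroup.closure_le]
          intro x hx
          simp only [Set.mem_insert_iff, Set.mem_singleton_iff] at hx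
          rcases hx with rfl|rfl|rfl
          · have he : (![1,0,0] : Fin 3 → ℝ) = ![1/2,1/2,0] + ![1/2,0,1/2] - ![0,1/2,1/2] := by
              funext i; fin_cases i <;> norm_num
            rw [he]; exact sub_mem (add_mem hA' hB') hC'
          · have he : (![0,1,0] : Fin 3 → ℝ) = ![1/2,1/2,0] + ![0,1/2,1/2] - ![1/2,0,1/2] := by
              funext i; fin_cases i <;> norm_num
            rw [he]; exact sub_mem (add_mem hA' hC') hB'
          · have he : (![0,0,1] : Fin 3 → ℝ) = ![1/2,0,1/2] + ![0,1/2,1/2] - ![1/2,1/2,0] := by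
              funext i; fin_cases i <;> norm_num
            rw [he]; exact sub_mem (add_mem hB' hC') hA'
        refine le_antisymm (L_le L _ hZL hZM hhalf ?_) ((AddSubgroup.closure_le _).mpr ?_)
        · rintro h hhL (rfl|rfl|rfl|rfl|rfl|rfl|rfl) <;>
            first
              | exact absurd hhL hne1
              | exact absurd hhL hne2
              | exact absurd hhL hne3
              | exact absurd hhL hD
              | exact AddSubgroup.subset_closure (by simp)
        · intro x hx
          simp only [Set.mem_insert_iff, Set.mem_singleton_iff] at hx
          rcases hx with rfl|rfl|rfl
          exacts [hA, hB, hC]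
      · by_cases hC : (![0,1/2,1/2] : Fin 3 → ℝ) ∈ L
        · exact absurd (hACB hA hC) hB
        · -- only A : case 3
          right; right; left
          have hZM : Zcube ≤ AddSubgroup.closure
              ({![1, 0, 0], ![0, 1, 0], ![0, 0, 1], ![1/2, 1/2, 0]} : Set (Fin 3 → ℝ)) :=
            Zcube_le_closure_insert _ (by intro x hx; simp only [Set.mem_insert_iff, Set.mem_singleton_iff] at hx ⊢; rcases hx with rfl|rfl|rfl <;> simp)
          refine le_antisymm (L_le L _ hZL hZM hhalf ?_) ((AddSubgroup.closure_le _).mpr ?_)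
          · rintro h hhL (rfl|rfl|rfl|rfl|rfl|rfl|rfl) <;>
              first
                | exact absurd hhL hne1
                | exact absurd hhL hne2
                | exact absurd hhL hne3
                | exact absurd hhL hB
                | exact absurd hhL hC
                | exact absurd hhL hD
                | exact AddSubgroup.subset_closure (by simp)
          · intro x hx
            simp only [Set.mem_insert_iff, Set.mem_singleton_iff] at hx
            rcases hx with rfl|rfl|rfl|rfl
            exacts [e1L, e2L, e3L, hA]
    · by_cases hB : (![1/2,0,1/2] : Fin 3 → ℝ) ∈ L
      · by_cases hC : (![0,1/2,1/2] : Fin 3 → ℝ) ∈ L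
        · exact absurd (hBCA hB hC) hA
        · -- only B : case 4
          right; right; right; left
          have hZM : Zcube ≤ AddSubgroup.closure
              ({![1, 0, 0], ![0, 1, 0], ![0, 0, 1], ![1/2, 0, 1/2]} : Set (Fin 3 → ℝ)) :=
            Zcube_le_closure_insert _ (by intro x hx; simp only [Set.mem_insert_iff, Set.mem_singleton_iff] at hx ⊢; rcases hx with rfl|rfl|rfl <;> simp)
          refine le_antisymm (L_le L _ hZL hZM hhalf ?_) ((AddSubgroup.closure_le _).mpr ?_)
          · rintro h hhL (rfl|rfl|rfl|rfl|rfl|rfl|rfl) <;>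
              first
                | exact absurd hhL hne1
                | exact absurd hhL hne2
                | exact absurd hhL hne3
                | exact absurd hhL hA
                | exact absurd hhL hC
                | exact absurd hhL hD
                | exact AddSubgroup.subset_closure (by simp)
          · intro x hx
            simp only [Set.mem_insert_iff, Set.mem_singleton_iff] at hx
            rcases hx with rfl|rfl|rfl|rfl
            exacts [e1L, e2L, e3L, hB]
      · by_cases hC : (![0,1/2,1/2] : Fin 3 → ℝ) ∈ L
        · -- only C : case 5
          right; right; right; right; left
          have hZM : Zcube ≤ AddSubgroup.closure
              ({![1, 0, 0], ![0, 1, 0], ![0, 0, 1], ![0, 1/2, 1/2]} : Set (Fin 3 → ℝ)) :=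
            Zcube_le_closure_insert _ (by intro x hx; simp only [Set.mem_insert_iff, Set.mem_singleton_iff] at hx ⊢; rcases hx with rfl|rfl|rfl <;> simp)
          refine le_antisymm (L_le L _ hZL hZM hhalf ?_) ((AddSubgroup.closure_le _).mpr ?_)
          · rintro h hhL (rfl|rfl|rfl|rfl|rfl|rfl|rfl) <;>
              first
                | exact absurd hhL hne1
                | exact absurd hhL hne2
                | exact absurd hhL hne3
                | exact absurd hhL hA
                | exact absurd hhL hB
                | exact absurd hhL hD
                | exact AddSubgroup.subset_closure (by simp)
          · intro x hx
            simp only [Set.mem_insert_iff, Set.mem_singleton_iff] at hx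
            rcases hx with rfl|rfl|rfl|rfl
            exacts [e1L, e2L, e3L, hC]
        · -- none : case 1
          left
          refine le_antisymm (L_le L _ hZL le_rfl hhalf ?_) hZL
          rintro h hhL (rfl|rfl|rfl|rfl|rfl|rfl|rfl) <;>
            first
              | exact absurd hhL hne1
              | exact absurd hhL hne2
              | exact absurd hhL hne3
              | exact absurd hhL hA
              | exact absurd hhL hB
              | exact absurd hhL hC
              | exact absurd hhL hD
end

section
/- Let W denote the group of 3×3 signed permutation matrices, let H ≤ W, let L be a lattice in ℝ³ with H·L = L, and let Γ = Γ(L,H). If v ∈ ℝ³ satisfies 2v ∉ L, then the stabilizer Γ_v = {γ ∈ Γ : γ(v) = v} is isomorphic to a subgroup of the symmetric group S₄ on four symbols (in particular, −I ∉ π(Γ_v)). -/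
/-- A *signed permutation matrix*: a `3 × 3` matrix having exactly one nonzero entry,
equal to `±1`, in each row and each column. -/
def IsSignedPerm (A : Matrix (Fin 3) (Fin 3) ℝ) : Prop :=
  ∃ (σ : Equiv.Perm (Fin 3)) (ε : Fin 3 → ℝ), (∀ i, ε i = 1 ∨ ε i = -1) ∧
    ∀ i j, A i j = if j = σ i then ε i else 0

private lemma memL' {L : AddSubgroup (Fin 3 → ℝ)} {H : Subgroup (Matrix.orthogonalGroup (Fin 3) ℝ)}
    (hHL : ∀ h ∈ H, (fun v => Matrix.mulVec ((h : Matrix (Fin 3) (Fin 3) ℝ)) v) ''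
      (L : Set (Fin 3 → ℝ)) = (L : Set (Fin 3 → ℝ)))
    {h : Matrix.orthogonalGroup (Fin 3) ℝ} (hh : h ∈ H) {t : Fin 3 → ℝ} (ht : t ∈ L) :
    Matrix.mulVec ((h : Matrix (Fin 3) (Fin 3) ℝ)) t ∈ L := by
  have hmem : Matrix.mulVec ((h : Matrix (Fin 3) (Fin 3) ℝ)) t ∈
      (fun v => Matrix.mulVec ((h : Matrix (Fin 3) (Fin 3) ℝ)) v) '' (L : Set (Fin 3 → ℝ)) :=
    ⟨t, ht, rfl⟩
  rw [hHL h hh] at hmem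
  exact hmem

/-- The split crystallographic group `Γ(L,H)`: the group of isometries of `ℝ³` of the
form `x ↦ t + h·x` with `t ∈ L` and `h ∈ H`, viewed as a group of bijections of `ℝ³`. -/
def SplitCrys (L : AddSubgroup (Fin 3 → ℝ)) (H : Subgroup (Matrix.orthogonalGroup (Fin 3) ℝ))
    (hHL : ∀ h ∈ H, (fun v => Matrix.mulVec ((h : Matrix (Fin 3) (Fin 3) ℝ)) v) ''
      (L : Set (Fin 3 → ℝ)) = (L : Set (Fin 3 → ℝ))) :
    Subgroup (Equiv.Perm (Fin 3 → ℝ)) where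
  carrier := {f | ∃ t ∈ L, ∃ h ∈ H,
    ∀ x, f x = t + Matrix.mulVec ((h : Matrix (Fin 3) (Fin 3) ℝ)) x}
  one_mem' := ⟨0, L.zero_mem, 1, H.one_mem, fun x => by simp⟩
  mul_mem' := by
    rintro f g ⟨t₁, ht₁, h₁, hh₁, hf⟩ ⟨t₂, ht₂, h₂, hh₂, hg⟩
    refine ⟨t₁ + Matrix.mulVec ((h₁ : Matrix (Fin 3) (Fin 3) ℝ)) t₂,
      L.add_mem ht₁ (memL' hHL hh₁ ht₂), h₁ * h₂, H.mul_mem hh₁ hh₂, fun x => ?_⟩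
    rw [Equiv.Perm.mul_apply, hg, hf, Matrix.mulVec_add, Matrix.mulVec_mulVec,
      Submonoid.coe_mul, add_assoc]
  inv_mem' := by
    rintro f ⟨t, ht, h, hh, hf⟩
    refine ⟨-(Matrix.mulVec (((h⁻¹ : Matrix.orthogonalGroup (Fin 3) ℝ) : Matrix (Fin 3) (Fin 3) ℝ)) t),
      L.neg_mem (memL' hHL (H.inv_mem hh) ht), h⁻¹, H.inv_mem hh, fun x => ?_⟩
    have hco : (h : Matrix (Fin 3) (Fin 3) ℝ) *
        ((h⁻¹ : Matrix.orthogonalGroup (Fin 3) ℝ) : Matrix (Fin 3) (Fin 3) ℝ) = 1 := by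
      rw [← Submonoid.coe_mul, mul_inv_cancel, OneMemClass.coe_one]
    have hsymm : (f⁻¹ : Equiv.Perm (Fin 3 → ℝ)) x = f.symm x := rfl
    rw [hsymm, Equiv.symm_apply_eq, hf, Matrix.mulVec_add, Matrix.mulVec_neg,
      Matrix.mulVec_mulVec, Matrix.mulVec_mulVec, hco, Matrix.one_mulVec, Matrix.one_mulVec]
    abel


/-! ### Auxiliary machinery: action on the four diagonals of the cube -/

private def sgnB (b : Bool) : ℝ := if b then 1 else -1

private def decBB (p : Bool × Bool) : Fin 3 → ℝ := ![1, sgnB p.1, sgnB p.2]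

open scoped Classical in
private noncomputable def encBB (x : Fin 3 → ℝ) : Bool × Bool :=
  ((if (if x 0 = 1 then x else -x) 1 = 1 then true else false),
   (if (if x 0 = 1 then x else -x) 2 = 1 then true else false))

private lemma sgnB_cases (b : Bool) : sgnB b = 1 ∨ sgnB b = -1 := by
  cases b <;> simp [sgnB]

private lemma decBB_zero (p : Bool × Bool) : decBB p 0 = 1 := rfl

private lemma decBB_S (p : Bool × Bool) (i : Fin 3) : decBB p i = 1 ∨ decBB p i = -1 := by
  fin_cases i
  · exact Or.inl rfl
  · exact sgnB_cases p.1
  · exact sgnB_cases p.2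

private lemma encBB_decBB (p : Bool × Bool) : encBB (decBB p) = p := by
  obtain ⟨b1, b2⟩ := p
  have h0 : decBB (b1, b2) 0 = 1 := rfl
  simp only [encBB, h0, if_pos]
  cases b1 <;> cases b2 <;> norm_num [decBB, sgnB, Matrix.cons_val_two, Matrix.tail_cons, Matrix.head_cons]

private lemma decBB_encBB {x : Fin 3 → ℝ} (hx : ∀ i, x i = 1 ∨ x i = -1) :
    decBB (encBB x) = x ∨ decBB (encBB x) = -x := by
  rcases hx 0 with h0 | h0
  · left
    simp only [encBB, h0, if_pos]
    funext i
    fin_cases i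
    · exact h0.symm
    · rcases hx 1 with h | h <;> simp [decBB, sgnB, h] <;> norm_num
    · rcases hx 2 with h | h <;> simp [decBB, sgnB, h] <;> norm_num
  · right
    have hne : ¬ (x 0 = 1) := by rw [h0]; norm_num
    simp only [encBB, hne, if_neg, ite_false]
    funext i
    fin_cases i
    · simp [decBB, h0]
    · rcases hx 1 with h | h <;> simp [decBB, sgnB, h] <;> norm_num
    · rcases hx 2 with h | h <;> simp [decBB, sgnB, h] <;> norm_num

private lemma encBB_neg {x : Fin 3 → ℝ} (h0 : x 0 = 1 ∨ x 0 = -1) : encBB (-x) = encBB x := by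
  rcases h0 with h | h
  · have h1 : ¬ ((-x) 0 = 1) := by rw [Pi.neg_apply, h]; norm_num
    simp only [encBB, h, if_pos, h1, if_neg, ite_false, neg_neg]
  · have h1 : ¬ (x 0 = 1) := by rw [h]; norm_num
    have h2 : (-x) 0 = 1 := by simp [h]
    simp only [encBB, h1, if_neg, ite_false, h2, if_pos, ite_true]

/-- The (conjugated) linear action of an isometry fixing `v`. -/
private def actL (v : Fin 3 → ℝ) (f : Equiv.Perm (Fin 3 → ℝ)) (x : Fin 3 → ℝ) : Fin 3 → ℝ :=
  f (v + x) - v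

private lemma actL_mul (v : Fin 3 → ℝ) (f g : Equiv.Perm (Fin 3 → ℝ)) (x : Fin 3 → ℝ) :
    actL v (f * g) x = actL v f (actL v g x) := by
  simp only [actL, Equiv.Perm.mul_apply]
  rw [add_sub_cancel]

private lemma mulVec_sp {A : Matrix (Fin 3) (Fin 3) ℝ} (hA : IsSignedPerm A) :
    ∃ (σ : Equiv.Perm (Fin 3)) (ε : Fin 3 → ℝ), (∀ i, ε i = 1 ∨ ε i = -1) ∧
      ∀ x i, A.mulVec x i = ε i * x (σ i) := by
  obtain ⟨σ, ε, hε, hA⟩ := hA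
  refine ⟨σ, ε, hε, fun x i => ?_⟩
  simp only [Matrix.mulVec, dotProduct, hA, ite_mul, zero_mul]
  rw [Finset.sum_ite_eq' Finset.univ (σ i) (fun j => ε i * x j)]
  simp

private lemma sp_S {A : Matrix (Fin 3) (Fin 3) ℝ} (hA : IsSignedPerm A) {x : Fin 3 → ℝ}
    (hx : ∀ i, x i = 1 ∨ x i = -1) : ∀ i, A.mulVec x i = 1 ∨ A.mulVec x i = -1 := by
  obtain ⟨σ, ε, hε, hmv⟩ := mulVec_sp hA
  intro i
  rw [hmv]
  rcases hε i with h | h <;> rcases hx (σ i) with h' | h' <;> rw [h, h'] <;> norm_num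

section Stab

variable {L : AddSubgroup (Fin 3 → ℝ)} {H : Subgroup (Matrix.orthogonalGroup (Fin 3) ℝ)}
  {hHL : ∀ h ∈ H, (fun v => Matrix.mulVec ((h : Matrix (Fin 3) (Fin 3) ℝ)) v) ''
      (L : Set (Fin 3 → ℝ)) = (L : Set (Fin 3 → ℝ))}
  {v : Fin 3 → ℝ}

private lemma stab_linear
    (hW : ∀ h ∈ H, IsSignedPerm ((h : Matrix (Fin 3) (Fin 3) ℝ)))
    (f : ↥(SplitCrys L H hHL ⊓ MulAction.stabilizer (Equiv.Perm (Fin 3 → ℝ)) v)) :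
    ∃ t ∈ L, ∃ A : Matrix (Fin 3) (Fin 3) ℝ, IsSignedPerm A ∧
      (∀ x, (f : Equiv.Perm (Fin 3 → ℝ)) x = t + A.mulVec x) ∧
      (∀ x, actL v (f : Equiv.Perm (Fin 3 → ℝ)) x = A.mulVec x) := by
  obtain ⟨hmem, hst⟩ := Subgroup.mem_inf.mp f.2
  obtain ⟨t, ht, h, hh, hfx⟩ := hmem
  have hv' : (f : Equiv.Perm (Fin 3 → ℝ)) v = v := by
    have := hst
    rwa [MulAction.mem_stabilizer_iff, Equiv.Perm.smul_def] at this
  have htv : t + Matrix.mulVec (h : Matrix (Fin 3) (Fin 3) ℝ) v = v := by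
    rw [← hfx v]; exact hv'
  refine ⟨t, ht, h, hW h hh, hfx, fun x => ?_⟩
  have h0 : t + Matrix.mulVec (h : Matrix (Fin 3) (Fin 3) ℝ) v - v = 0 := by
    rw [htv]; simp
  rw [actL, hfx, Matrix.mulVec_add]
  have hrearr : t + (Matrix.mulVec (h : Matrix (Fin 3) (Fin 3) ℝ) v
        + Matrix.mulVec (h : Matrix (Fin 3) (Fin 3) ℝ) x) - v
      = (t + Matrix.mulVec (h : Matrix (Fin 3) (Fin 3) ℝ) v - v)
        + Matrix.mulVec (h : Matrix (Fin 3) (Fin 3) ℝ) x := by abel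
  rw [hrearr, h0, zero_add]

private lemma actL_S
    (hW : ∀ h ∈ H, IsSignedPerm ((h : Matrix (Fin 3) (Fin 3) ℝ)))
    (f : ↥(SplitCrys L H hHL ⊓ MulAction.stabilizer (Equiv.Perm (Fin 3 → ℝ)) v))
    {y : Fin 3 → ℝ} (hy : ∀ i, y i = 1 ∨ y i = -1) :
    ∀ i, actL v (f : Equiv.Perm (Fin 3 → ℝ)) y i = 1 ∨
      actL v (f : Equiv.Perm (Fin 3 → ℝ)) y i = -1 := by
  obtain ⟨t, ht, A, hsp, hfx, hact⟩ := stab_linear hW f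
  intro i
  rw [hact]
  exact sp_S hsp hy i

private lemma actL_cancel
    (f : ↥(SplitCrys L H hHL ⊓ MulAction.stabilizer (Equiv.Perm (Fin 3 → ℝ)) v))
    (x : Fin 3 → ℝ) :
    actL v ((f⁻¹ : ↥(SplitCrys L H hHL ⊓ MulAction.stabilizer (Equiv.Perm (Fin 3 → ℝ)) v)) :
      Equiv.Perm (Fin 3 → ℝ)) (actL v (f : Equiv.Perm (Fin 3 → ℝ)) x) = x := by
  have hcoe : ((f⁻¹ : ↥(SplitCrys L H hHL ⊓ MulAction.stabilizer (Equiv.Perm (Fin 3 → ℝ)) v)) :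
      Equiv.Perm (Fin 3 → ℝ)) = ((f : Equiv.Perm (Fin 3 → ℝ)))⁻¹ := rfl
  simp only [actL, hcoe, add_sub_cancel, Equiv.Perm.inv_def, Equiv.symm_apply_apply, add_sub_cancel_left]

private lemma enc_act
    (hW : ∀ h ∈ H, IsSignedPerm ((h : Matrix (Fin 3) (Fin 3) ℝ)))
    (f : ↥(SplitCrys L H hHL ⊓ MulAction.stabilizer (Equiv.Perm (Fin 3 → ℝ)) v))
    {y : Fin 3 → ℝ} (hy : ∀ i, y i = 1 ∨ y i = -1) :
    encBB (actL v (f : Equiv.Perm (Fin 3 → ℝ)) (decBB (encBB y))) =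
      encBB (actL v (f : Equiv.Perm (Fin 3 → ℝ)) y) := by
  obtain ⟨t, ht, A, hsp, hfx, hact⟩ := stab_linear hW f
  rcases decBB_encBB hy with h | h
  · rw [h]
  · rw [h, hact, hact, Matrix.mulVec_neg]
    exact encBB_neg (sp_S hsp hy 0)

private lemma ker_triv
    (hW : ∀ h ∈ H, IsSignedPerm ((h : Matrix (Fin 3) (Fin 3) ℝ)))
    (hv : (2 : ℝ) • v ∉ L)
    (f : ↥(SplitCrys L H hHL ⊓ MulAction.stabilizer (Equiv.Perm (Fin 3 → ℝ)) v))
    (hf1 : ∀ p : Bool × Bool, encBB (actL v (f : Equiv.Perm (Fin 3 → ℝ)) (decBB p)) = p) :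
    f = 1 := by
  obtain ⟨t, ht, A, hsp, hfx, hact⟩ := stab_linear hW f
  obtain ⟨σ, ε, hε, hmv⟩ := mulVec_sp hsp
  have cond : ∀ p : Bool × Bool, A.mulVec (decBB p) = decBB p ∨
      A.mulVec (decBB p) = -(decBB p) := by
    intro p
    have h2 := decBB_encBB (x := actL v (f : Equiv.Perm (Fin 3 → ℝ)) (decBB p))
      (actL_S hW f (decBB_S p))
    rw [hf1 p, hact] at h2
    rcases h2 with h | h
    · exact Or.inl h.symm
    · exact Or.inr (neg_eq_iff_eq_neg.mpr h).symm
  have tri : ∀ j : Fin 3, j = 0 ∨ j = 1 ∨ j = 2 := by decide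
  set c := ε 0 with hc0
  have hc : c = 1 ∨ c = -1 := hε 0
  have hone : ∀ j : Fin 3, decBB (true, true) j = 1 := by
    intro j; fin_cases j <;> rfl
  have hce : ∀ i, ε i = c := by
    rcases cond (true, true) with h | h
    · have he : ∀ i, ε i = 1 := by
        intro i
        have h1 := congrFun h i
        rw [hmv] at h1
        simpa [hone] using h1
      intro i; rw [he i, hc0, he 0]
    · have he : ∀ i, ε i = -1 := by
        intro i
        have h1 := congrFun h i
        rw [hmv] at h1
        simpa [hone] using h1
      intro i; rw [he i, hc0, he 0]
  have fixlem : ∀ p : Bool × Bool,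
      decBB p 0 + decBB p 1 + decBB p 2 = 1 → ∀ i, decBB p (σ i) = decBB p i := by
    intro p hsum
    have hperm : decBB p (σ 0) + decBB p (σ 1) + decBB p (σ 2)
        = decBB p 0 + decBB p 1 + decBB p 2 := by
      have h3 := Equiv.sum_comp σ (decBB p)
      rwa [Fin.sum_univ_three, Fin.sum_univ_three] at h3
    rcases cond p with h | h
    · have e : ∀ i, c * decBB p (σ i) = decBB p i := fun i => by
        have h1 := congrFun h i; rwa [hmv, hce] at h1
      have hsum2 : c * (decBB p (σ 0) + decBB p (σ 1) + decBB p (σ 2)) = 1 := by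
        rw [mul_add, mul_add, e 0, e 1, e 2]; exact hsum
      rw [hperm, hsum, mul_one] at hsum2
      intro i
      have h1 := e i
      rw [hsum2, one_mul] at h1
      exact h1
    · have e : ∀ i, c * decBB p (σ i) = -decBB p i := fun i => by
        have h1 := congrFun h i
        rw [hmv, hce] at h1
        simpa using h1
      have hsum2 : c * (decBB p (σ 0) + decBB p (σ 1) + decBB p (σ 2)) = -1 := by
        rw [mul_add, mul_add, e 0, e 1, e 2]; linarith [hsum]
      rw [hperm, hsum, mul_one] at hsum2
      intro i
      have h1 := e i
      rw [hsum2] at h1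
      linarith [h1]
  have hfix1 : ∀ i, decBB (true, false) (σ i) = decBB (true, false) i :=
    fixlem (true, false) (by norm_num [decBB, sgnB, Matrix.cons_val_two, Matrix.tail_cons, Matrix.head_cons])
  have hfix2 : ∀ i, decBB (false, true) (σ i) = decBB (false, true) i :=
    fixlem (false, true) (by norm_num [decBB, sgnB, Matrix.cons_val_two, Matrix.tail_cons, Matrix.head_cons])
  have hσ2 : σ 2 = 2 := by
    have h1 := hfix1 2
    rcases tri (σ 2) with h | h | h
    · rw [h] at h1; norm_num [decBB, sgnB, Matrix.cons_val_two, Matrix.tail_cons, Matrix.head_cons] at h1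
    · rw [h] at h1; norm_num [decBB, sgnB, Matrix.cons_val_two, Matrix.tail_cons, Matrix.head_cons] at h1
    · exact h
  have hσ1 : σ 1 = 1 := by
    have h1 := hfix2 1
    rcases tri (σ 1) with h | h | h
    · rw [h] at h1; norm_num [decBB, sgnB, Matrix.cons_val_two, Matrix.tail_cons, Matrix.head_cons] at h1
    · exact h
    · rw [h] at h1; norm_num [decBB, sgnB, Matrix.cons_val_two, Matrix.tail_cons, Matrix.head_cons] at h1
  have hσ0 : σ 0 = 0 := by
    rcases tri (σ 0) with h | h | h
    · exact h
    · exact absurd (σ.injective (h.trans hσ1.symm)) (by decide)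
    · exact absurd (σ.injective (h.trans hσ2.symm)) (by decide)
  have hAx : ∀ x : Fin 3 → ℝ, A.mulVec x = fun i => c * x i := by
    intro x
    funext i
    rw [hmv, hce]
    have hσi : σ i = i := by
      fin_cases i
      · exact hσ0
      · exact hσ1
      · exact hσ2
    rw [hσi]
  have htv : t + A.mulVec v = v := by
    have hv' : (f : Equiv.Perm (Fin 3 → ℝ)) v = v := by
      have h3 := (Subgroup.mem_inf.mp f.2).2
      rwa [MulAction.mem_stabilizer_iff, Equiv.Perm.smul_def] at h3
    rw [← hfx v]; exact hv'
  rcases hc with h1 | h1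
  · have ht0 : t = 0 := by
      funext i
      have h2 := congrFun htv i
      rw [hAx] at h2
      simp only [Pi.add_apply, h1, one_mul] at h2
      simpa using h2
    refine Subtype.ext (Equiv.ext fun x => ?_)
    have h3 : (f : Equiv.Perm (Fin 3 → ℝ)) x = x := by
      rw [hfx x, hAx, ht0]
      funext i
      simp [h1]
    simpa using h3
  · exfalso
    have h2 : t = (2 : ℝ) • v := by
      funext i
      have h3 := congrFun htv i
      rw [hAx] at h3
      simp only [Pi.add_apply, h1] at h3
      simp only [Pi.smul_apply, smul_eq_mul]
      linarith
    exact hv (h2 ▸ ht)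

private noncomputable def diagPerm
    (hW : ∀ h ∈ H, IsSignedPerm ((h : Matrix (Fin 3) (Fin 3) ℝ)))
    (f : ↥(SplitCrys L H hHL ⊓ MulAction.stabilizer (Equiv.Perm (Fin 3 → ℝ)) v)) :
    Equiv.Perm (Bool × Bool) where
  toFun p := encBB (actL v (f : Equiv.Perm (Fin 3 → ℝ)) (decBB p))
  invFun p := encBB (actL v
    ((f⁻¹ : ↥(SplitCrys L H hHL ⊓ MulAction.stabilizer (Equiv.Perm (Fin 3 → ℝ)) v)) :
      Equiv.Perm (Fin 3 → ℝ)) (decBB p))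
  left_inv p := by
    beta_reduce
    rw [enc_act hW f⁻¹ (actL_S hW f (decBB_S p)), actL_cancel, encBB_decBB]
  right_inv p := by
    beta_reduce
    rw [enc_act hW f (actL_S hW f⁻¹ (decBB_S p))]
    have h2 := actL_cancel f⁻¹ (decBB p)
    rw [inv_inv] at h2
    rw [h2, encBB_decBB]

private noncomputable def diagHom
    (hW : ∀ h ∈ H, IsSignedPerm ((h : Matrix (Fin 3) (Fin 3) ℝ))) (v : Fin 3 → ℝ) :
    ↥(SplitCrys L H hHL ⊓ MulAction.stabilizer (Equiv.Perm (Fin 3 → ℝ)) v) →*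
      Equiv.Perm (Bool × Bool) :=
  MonoidHom.mk' (diagPerm hW) (by
    intro f g
    refine Equiv.ext fun p => ?_
    simp only [Equiv.Perm.mul_apply]
    show encBB (actL v ((f * g :
        ↥(SplitCrys L H hHL ⊓ MulAction.stabilizer (Equiv.Perm (Fin 3 → ℝ)) v)) :
        Equiv.Perm (Fin 3 → ℝ)) (decBB p)) =
      encBB (actL v (f : Equiv.Perm (Fin 3 → ℝ))
        (decBB (encBB (actL v (g : Equiv.Perm (Fin 3 → ℝ)) (decBB p)))))
    rw [enc_act hW f (actL_S hW g (decBB_S p)),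
      show ((f * g : ↥(SplitCrys L H hHL ⊓ MulAction.stabilizer (Equiv.Perm (Fin 3 → ℝ)) v)) :
        Equiv.Perm (Fin 3 → ℝ)) = (f : Equiv.Perm (Fin 3 → ℝ)) * (g : Equiv.Perm (Fin 3 → ℝ))
        from rfl,
      actL_mul])

private lemma diagHom_injective
    (hW : ∀ h ∈ H, IsSignedPerm ((h : Matrix (Fin 3) (Fin 3) ℝ)))
    (hv : (2 : ℝ) • v ∉ L) :
    Function.Injective (diagHom (hHL := hHL) hW v) := by
  rw [injective_iff_map_eq_one]
  intro f hf
  exact ker_triv hW hv f (fun p => by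
    have h2 := Equiv.ext_iff.mp (show diagPerm hW f = 1 from hf) p
    exact h2)

end Stab

/-- Let `W` be the group of `3 × 3` signed permutation matrices, let
`H ≤ W` (a subgroup of `O(3)` all of whose elements are signed permutation matrices),
let `L` be a lattice in `ℝ³` with `H·L = L`, and let `Γ = Γ(L,H)`.  If `v ∈ ℝ³`
satisfies `2v ∉ L`, then the stabilizer `Γ_v = {γ ∈ Γ : γ(v) = v}` is isomorphic to a
subgroup of the symmetric group `S₄` (in particular no element of `Γ_v` has linear part
`-I`). -/
theorem stabilizer_embeds_in_S4 (L : AddSubgroup (Fin 3 → ℝ)) (hL : IsLattice L)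
    (H : Subgroup (Matrix.orthogonalGroup (Fin 3) ℝ))
    (hW : ∀ h ∈ H, IsSignedPerm ((h : Matrix (Fin 3) (Fin 3) ℝ)))
    (hHL : ∀ h ∈ H, (fun v => Matrix.mulVec ((h : Matrix (Fin 3) (Fin 3) ℝ)) v) ''
      (L : Set (Fin 3 → ℝ)) = (L : Set (Fin 3 → ℝ)))
    (v : Fin 3 → ℝ) (hv : (2 : ℝ) • v ∉ L) :
    (∃ φ : ↥(SplitCrys L H hHL ⊓ MulAction.stabilizer (Equiv.Perm (Fin 3 → ℝ)) v) →*
        Equiv.Perm (Fin 4), Function.Injective φ) ∧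
    ¬ ∃ f : Equiv.Perm (Fin 3 → ℝ), f ∈ SplitCrys L H hHL ∧ f v = v ∧
        ∀ x, f x - f 0 = -x := by
  constructor
  · have hcard : Fintype.card (Bool × Bool) = 4 := by simp
    refine ⟨(Equiv.Perm.viaEmbeddingHom
        (Fintype.equivFinOfCardEq hcard).toEmbedding).comp (diagHom (hHL := hHL) hW v),
      fun a b hab => diagHom_injective hW hv
        (Equiv.Perm.viaEmbeddingHom_injective _ hab)⟩
  · rintro ⟨f, ⟨t, ht, h, hh, hfx⟩, hfv, hneg⟩
    have h0 : f 0 = t := by rw [hfx 0, Matrix.mulVec_zero, add_zero]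
    have hv0 := hneg v
    rw [hfv, h0] at hv0
    have h2 : t = (2 : ℝ) • v := by
      funext i
      have h3 := congrFun hv0 i
      simp only [Pi.sub_apply, Pi.neg_apply] at h3
      simp only [Pi.smul_apply, smul_eq_mul]
      linarith
    exact hv (h2 ▸ ht)
end

section
/- Let L, L' be lattices in ℝ³ and let H, H' ≤ O(3) satisfy H·L = L and H'·L' = L'. Then the groups Γ(L,H) and Γ(L',H') are isomorphic as abstract groups if and only if the pairs (L,H) and (L',H') are arithmetically equivalent, i.e., if and only if there exists λ ∈ GL₃(ℝ) such that λ·L = L' and λHλ⁻¹ = H'. -/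
noncomputable section
abbrev V3 := Fin 3 → ℝ
abbrev M3 := Matrix (Fin 3) (Fin 3) ℝ
abbrev OG3 := Matrix.orthogonalGroup (Fin 3) ℝ

private lemma matrix_eq_of_mulVec {A B : M3} (h : ∀ v, A.mulVec v = B.mulVec v) : A = B := by
  ext i j
  have := congrFun (h (Pi.single j 1)) i
  simpa using this

private lemma matrix_eq_on_span {A B : M3} {s : Set V3}
    (hs : Submodule.span ℝ s = ⊤) (h : ∀ v ∈ s, A.mulVec v = B.mulVec v) : A = B := by
  have hl : A.mulVecLin = B.mulVecLin := by
    apply LinearMap.ext_on hs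
    intro x hx
    simpa using h x hx
  exact matrix_eq_of_mulVec fun v => congrFun (congrArg (fun f : V3 →ₗ[ℝ] V3 => ⇑f) hl) v

private lemma lattice_span_top {L : AddSubgroup V3} (hL : IsLattice L) :
    Submodule.span ℝ (L : Set V3) = ⊤ := by
  obtain ⟨b, hb⟩ := hL
  rw [eq_top_iff, ← b.span_eq]
  apply Submodule.span_le.2
  intro x hx
  apply Submodule.subset_span
  have : x ∈ (Submodule.span ℤ (Set.range ⇑b) : Set V3) := Submodule.subset_span hx
  rw [← hb] at this
  exact this

private lemma orth_sq_eq_one {h : M3} (hmem : h ∈ Matrix.orthogonalGroup (Fin 3) ℝ)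
    (hsq : (1 - h) * (1 - h) = 0) : h = 1 := by
  have hstar : h * star h = 1 := (Matrix.mem_orthogonalGroup_iff _ _).1 hmem
  have hstar' : star h * h = 1 := (Matrix.mem_orthogonalGroup_iff' _ _).1 hmem
  have h2 : h + star h = 2 := by
    have key := congrArg (fun M => star h * M) hsq
    simp only [mul_zero] at key
    have expand : star h * ((1 - h) * (1 - h)) = star h - 1 - 1 + h := by
      have : star h * ((1 - h) * (1 - h)) = star h - star h * h - star h * h + star h * h * h := by
        noncomm_ring
      rw [this, hstar']; noncomm_ring
    rw [expand] at key
    have : h + star h = 1 + 1 := by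
      have := congrArg (fun M => M + 1 + 1) key
      simpa [sub_add_cancel, add_comm, add_left_comm, add_assoc, sub_eq_add_neg] using this
    rw [this]; norm_num
  -- diagonal entries are 1
  have hdiag : ∀ i, h i i = 1 := by
    intro i
    have := congrFun (congrFun h2 i) i
    have hst : star h i i = h i i := by
      simp [Matrix.star_apply]
    rw [Matrix.add_apply, hst] at this
    have h2e : (2 : M3) i i = 2 := by
      have : (2 : M3) = (1 : M3) + 1 := by norm_num
      rw [this]; simp [Matrix.add_apply, Matrix.one_apply]; norm_num
    rw [h2e] at this
    linarith
  -- rows are unit vectors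
  have hrow : ∀ i, ∑ j, h i j * h i j = 1 := by
    intro i
    have := congrFun (congrFun hstar i) i
    simpa [Matrix.mul_apply, Matrix.star_apply, Matrix.one_apply] using this
  ext i j
  rcases eq_or_ne i j with rfl | hij
  · simp [hdiag i, Matrix.one_apply]
  · have hsum := hrow i
    have : ∑ k ∈ Finset.univ.erase i, h i k * h i k = 0 := by
      have he := Finset.add_sum_erase Finset.univ (fun k => h i k * h i k) (Finset.mem_univ i)
      rw [← he] at hsum
      simp only [hdiag i] at hsum
      linarith
    have hz : h i j * h i j = 0 := by
      have hnonneg : ∀ k ∈ Finset.univ.erase i, 0 ≤ h i k * h i k := fun k _ => mul_self_nonneg _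
      have := (Finset.sum_eq_zero_iff_of_nonneg hnonneg).1 this j (by simp [Ne.symm hij])
      exact this
    have : h i j = 0 := by nlinarith [sq_nonneg (h i j)]
    simp [this, Matrix.one_apply, hij]


private def trPerm (t : V3) : Equiv.Perm V3 where
  toFun x := t + x
  invFun x := -t + x
  left_inv x := by simp
  right_inv x := by simp

@[simp] private lemma trPerm_apply (t x : V3) : trPerm t x = t + x := rfl

private def matPerm (lam : M3) (hdet : IsUnit lam.det) : Equiv.Perm V3 where
  toFun := lam.mulVec
  invFun := lam⁻¹.mulVec
  left_inv x := by rw [Matrix.mulVec_mulVec, Matrix.nonsing_inv_mul _ hdet, Matrix.one_mulVec]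
  right_inv x := by rw [Matrix.mulVec_mulVec, Matrix.mul_nonsing_inv _ hdet, Matrix.one_mulVec]

@[simp] private lemma matPerm_apply (lam : M3) (hdet) (x : V3) :
    matPerm lam hdet x = lam.mulVec x := rfl

@[simp] private lemma matPerm_inv_apply (lam : M3) (hdet) (x : V3) :
    (matPerm lam hdet)⁻¹ x = lam⁻¹.mulVec x := rfl

private lemma orth_coe_mul_inv (h : OG3) :
    (h : M3) * ((h⁻¹ : OG3) : M3) = 1 := by
  rw [← Submonoid.coe_mul, mul_inv_cancel, OneMemClass.coe_one]

private lemma orth_coe_inv_mul (h : OG3) :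
    ((h⁻¹ : OG3) : M3) * (h : M3) = 1 := by
  rw [← Submonoid.coe_mul, inv_mul_cancel, OneMemClass.coe_one]

private lemma orth_det_isUnit (h : OG3) : IsUnit ((h : M3).det) :=
  (Matrix.isUnit_iff_isUnit_det _).1
    ⟨⟨(h : M3), ((h⁻¹ : OG3) : M3), orth_coe_mul_inv h, orth_coe_inv_mul h⟩, rfl⟩


private lemma conj_fwd {L L' : AddSubgroup V3} {H H' : Subgroup OG3}
    (hHL : ∀ h ∈ H, (fun v => Matrix.mulVec ((h : M3)) v) '' (L : Set V3) = (L : Set V3))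
    (hH'L' : ∀ h ∈ H', (fun v => Matrix.mulVec ((h : M3)) v) '' (L' : Set V3) = (L' : Set V3))
    {lam : M3} (hdet : IsUnit lam.det)
    (himL : (fun v => Matrix.mulVec lam v) '' (L : Set V3) = (L' : Set V3))
    (himH : (fun h : OG3 => lam * (h : M3) * lam⁻¹) '' (H : Set OG3) =
      (fun h : OG3 => (h : M3)) '' (H' : Set OG3)) :
    ∀ f ∈ SplitCrys L H hHL, (matPerm lam hdet) * f * (matPerm lam hdet)⁻¹ ∈
      SplitCrys L' H' hH'L' := by
  rintro f ⟨t, ht, h, hh, hf⟩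
  have hmemH : lam * (h : M3) * lam⁻¹ ∈ (fun h : OG3 => (h : M3)) '' (H' : Set OG3) := by
    rw [← himH]; exact ⟨h, hh, rfl⟩
  obtain ⟨h', hh', hco⟩ := hmemH
  have htL' : lam.mulVec t ∈ L' := by
    have : lam.mulVec t ∈ (L' : Set V3) := by rw [← himL]; exact ⟨t, ht, rfl⟩
    exact this
  refine ⟨lam.mulVec t, htL', h', hh', fun x => ?_⟩
  have : ((matPerm lam hdet) * f * (matPerm lam hdet)⁻¹) x
      = lam.mulVec (f (lam⁻¹.mulVec x)) := rfl
  rw [this, hf, Matrix.mulVec_add, Matrix.mulVec_mulVec, Matrix.mulVec_mulVec, ← hco]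

private lemma conj_bwd {L L' : AddSubgroup V3} {H H' : Subgroup OG3}
    (hHL : ∀ h ∈ H, (fun v => Matrix.mulVec ((h : M3)) v) '' (L : Set V3) = (L : Set V3))
    (hH'L' : ∀ h ∈ H', (fun v => Matrix.mulVec ((h : M3)) v) '' (L' : Set V3) = (L' : Set V3))
    {lam : M3} (hdet : IsUnit lam.det)
    (himL : (fun v => Matrix.mulVec lam v) '' (L : Set V3) = (L' : Set V3))
    (himH : (fun h : OG3 => lam * (h : M3) * lam⁻¹) '' (H : Set OG3) =
      (fun h : OG3 => (h : M3)) '' (H' : Set OG3)) :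
    ∀ f ∈ SplitCrys L' H' hH'L', (matPerm lam hdet)⁻¹ * f * (matPerm lam hdet) ∈
      SplitCrys L H hHL := by
  rintro f ⟨t', ht', h', hh', hf⟩
  have hmemH : (h' : M3) ∈ (fun h : OG3 => lam * (h : M3) * lam⁻¹) '' (H : Set OG3) := by
    rw [himH]; exact ⟨h', hh', rfl⟩
  obtain ⟨h, hh, hco⟩ := hmemH
  have hmemt : t' ∈ (fun v => Matrix.mulVec lam v) '' (L : Set V3) := by
    rw [himL]; exact ht'
  obtain ⟨t, ht, hct⟩ := hmemt
  have hcomat : lam⁻¹ * (h' : M3) * lam = (h : M3) := by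
    rw [← hco]
    simp only [Matrix.mul_assoc]
    rw [Matrix.nonsing_inv_mul _ hdet]
    simp only [← Matrix.mul_assoc]
    rw [Matrix.nonsing_inv_mul _ hdet, Matrix.one_mul, Matrix.mul_one]
  have hcot : lam⁻¹.mulVec t' = t := by
    rw [← hct]
    dsimp only
    rw [Matrix.mulVec_mulVec, Matrix.nonsing_inv_mul _ hdet, Matrix.one_mulVec]
  refine ⟨t, ht, h, hh, fun x => ?_⟩
  have : ((matPerm lam hdet)⁻¹ * f * (matPerm lam hdet)) x
      = lam⁻¹.mulVec (f (lam.mulVec x)) := rfl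
  rw [this, hf, Matrix.mulVec_add, hcot, Matrix.mulVec_mulVec, Matrix.mulVec_mulVec, hcomat]

private lemma easy_dir {L L' : AddSubgroup V3} {H H' : Subgroup OG3}
    (hHL : ∀ h ∈ H, (fun v => Matrix.mulVec ((h : M3)) v) '' (L : Set V3) = (L : Set V3))
    (hH'L' : ∀ h ∈ H', (fun v => Matrix.mulVec ((h : M3)) v) '' (L' : Set V3) = (L' : Set V3))
    {lam : M3} (hdet : IsUnit lam.det)
    (himL : (fun v => Matrix.mulVec lam v) '' (L : Set V3) = (L' : Set V3))
    (himH : (fun h : OG3 => lam * (h : M3) * lam⁻¹) '' (H : Set OG3) =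
      (fun h : OG3 => (h : M3)) '' (H' : Set OG3)) :
    Nonempty (↥(SplitCrys L H hHL) ≃* ↥(SplitCrys L' H' hH'L')) := by
  set c := matPerm lam hdet with hc
  refine ⟨{ toFun := fun g => ⟨c * g.1 * c⁻¹, conj_fwd hHL hH'L' hdet himL himH _ g.2⟩,
            invFun := fun g => ⟨c⁻¹ * g.1 * c, conj_bwd hHL hH'L' hdet himL himH _ g.2⟩,
            left_inv := fun g => ?_, right_inv := fun g => ?_, map_mul' := fun g₁ g₂ => ?_ }⟩
  · ext1; simp only [Subgroup.coe_mk]; group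
  · ext1; simp only [Subgroup.coe_mk]; group
  · ext1; simp only [Subgroup.coe_mul, Subgroup.coe_mk]; group

/-- An element of `SplitCrys` commutes with all of its conjugates iff it is a translation. -/
private lemma trans_char {L : AddSubgroup V3} {H : Subgroup OG3}
    {hHL : ∀ h ∈ H, (fun v => Matrix.mulVec ((h : M3)) v) '' (L : Set V3) = (L : Set V3)}
    (hspan : Submodule.span ℝ (L : Set V3) = ⊤) (g : ↥(SplitCrys L H hHL)) :
    (∀ a : ↥(SplitCrys L H hHL), (a * g * a⁻¹) * g = g * (a * g * a⁻¹)) ↔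
      ∀ x, (g : Equiv.Perm V3) x = (g : Equiv.Perm V3) 0 + x := by
  constructor
  · intro hcomm
    obtain ⟨t, ht, h, hh, hf⟩ := g.2
    have hmat : (h : M3) = 1 := by
      refine orth_sq_eq_one h.2 ?_
      refine matrix_eq_on_span hspan fun l hl => ?_
      rw [Matrix.zero_mulVec]
      have hamem : trPerm l ∈ SplitCrys L H hHL :=
        ⟨l, hl, 1, H.one_mem, fun x => by simp [trPerm_apply]⟩
      set a : ↥(SplitCrys L H hHL) := ⟨trPerm l, hamem⟩ with ha
      have hainv : ∀ x, ((a⁻¹ : ↥(SplitCrys L H hHL)) : Equiv.Perm V3) x = -l + x := fun x => rfl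
      have hc : ∀ x, ((a * g * a⁻¹ : ↥(SplitCrys L H hHL)) : Equiv.Perm V3) x
          = l + (g : Equiv.Perm V3) (-l + x) := fun x => rfl
      have hkey := congrArg (fun z : ↥(SplitCrys L H hHL) => (z : Equiv.Perm V3) 0) (hcomm a)
      have e1 : ((a * g * a⁻¹ * g : ↥(SplitCrys L H hHL)) : Equiv.Perm V3) 0
          = ((a * g * a⁻¹ : ↥(SplitCrys L H hHL)) : Equiv.Perm V3) ((g : Equiv.Perm V3) 0) := rfl
      have e2 : ((g * (a * g * a⁻¹) : ↥(SplitCrys L H hHL)) : Equiv.Perm V3) 0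
          = (g : Equiv.Perm V3) (((a * g * a⁻¹ : ↥(SplitCrys L H hHL)) : Equiv.Perm V3) 0) := rfl
      rw [e1, e2, hc, hc] at hkey
      simp only [hf] at hkey
      -- hkey is now an equation in V3
      have expand : ((1 - (h : M3)) * (1 - (h : M3))).mulVec l
          = l - (h : M3).mulVec l - (h : M3).mulVec l + ((h : M3) * (h : M3)).mulVec l := by
        simp only [Matrix.sub_mul, Matrix.mul_sub, Matrix.one_mul, Matrix.mul_one,
          Matrix.sub_mulVec, Matrix.one_mulVec]
        abel
      rw [expand]
      simp only [Matrix.mulVec_add, Matrix.mulVec_neg, Matrix.mulVec_zero, add_zero,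
        ← Matrix.mulVec_mulVec] at hkey ⊢
      linear_combination hkey
    intro x
    rw [hf x, hf 0, hmat, Matrix.one_mulVec, Matrix.mulVec_zero, add_zero]
  · intro htrans a
    obtain ⟨s, hs, k, hk, ha⟩ := a.2
    have hASymm : ∀ x, (a : Equiv.Perm V3) (((a : Equiv.Perm V3))⁻¹ x) = x := fun x =>
      Equiv.apply_symm_apply _ x
    have hc : ∀ x, ((a * g * a⁻¹ : ↥(SplitCrys L H hHL)) : Equiv.Perm V3) x
        = (k : M3).mulVec ((g : Equiv.Perm V3) 0) + x := by
      intro x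
      have h1 : ((a * g * a⁻¹ : ↥(SplitCrys L H hHL)) : Equiv.Perm V3) x
          = (a : Equiv.Perm V3) ((g : Equiv.Perm V3) (((a : Equiv.Perm V3))⁻¹ x)) := rfl
      rw [h1, htrans, ha, Matrix.mulVec_add]
      have h2 : (k : M3).mulVec (((a : Equiv.Perm V3))⁻¹ x) = x - s := by
        have := ha (((a : Equiv.Perm V3))⁻¹ x)
        rw [hASymm x] at this
        linear_combination -this
      rw [h2]; abel
    apply Subtype.ext
    apply Equiv.ext
    intro x
    have e1 : ((a * g * a⁻¹ * g : ↥(SplitCrys L H hHL)) : Equiv.Perm V3) x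
        = ((a * g * a⁻¹ : ↥(SplitCrys L H hHL)) : Equiv.Perm V3) ((g : Equiv.Perm V3) x) := rfl
    have e2 : ((g * (a * g * a⁻¹) : ↥(SplitCrys L H hHL)) : Equiv.Perm V3) x
        = (g : Equiv.Perm V3) (((a * g * a⁻¹ : ↥(SplitCrys L H hHL)) : Equiv.Perm V3) x) := rfl
    rw [e1, e2, hc, hc, htrans x, htrans ((k : M3).mulVec ((g : Equiv.Perm V3) 0) + x)]
    abel


private lemma trPerm_mem {L : AddSubgroup V3} {H : Subgroup OG3}
    {hHL : ∀ h ∈ H, (fun v => Matrix.mulVec ((h : M3)) v) '' (L : Set V3) = (L : Set V3)}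
    {l : V3} (hl : l ∈ L) : trPerm l ∈ SplitCrys L H hHL :=
  ⟨l, hl, 1, H.one_mem, fun x => by simp [trPerm_apply]⟩

private lemma psi_props {L L' : AddSubgroup V3} {H H' : Subgroup OG3}
    {hHL : ∀ h ∈ H, (fun v => Matrix.mulVec ((h : M3)) v) '' (L : Set V3) = (L : Set V3)}
    {hH'L' : ∀ h ∈ H', (fun v => Matrix.mulVec ((h : M3)) v) '' (L' : Set V3) = (L' : Set V3)}
    (hspanL : Submodule.span ℝ (L : Set V3) = ⊤)
    (hspanL' : Submodule.span ℝ (L' : Set V3) = ⊤)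
    (e : ↥(SplitCrys L H hHL) ≃* ↥(SplitCrys L' H' hH'L')) :
    ∃ ψ : V3 → V3,
      (∀ l, l ∈ L → ψ l ∈ L') ∧
      (∀ l (hl : l ∈ L),
        ((e ⟨trPerm l, trPerm_mem hl⟩ : ↥(SplitCrys L' H' hH'L')) : Equiv.Perm V3)
          = trPerm (ψ l)) ∧
      (∀ l₁ l₂, l₁ ∈ L → l₂ ∈ L → ψ (l₁ + l₂) = ψ l₁ + ψ l₂) ∧
      (ψ 0 = 0) ∧
      (∀ (n : ℤ) l, l ∈ L → ψ (n • l) = n • ψ l) := by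
  classical
  set ψ : V3 → V3 := fun v => if hv : v ∈ L then
    ((e ⟨trPerm v, trPerm_mem hv⟩ : ↥(SplitCrys L' H' hH'L')) : Equiv.Perm V3) 0 else 0 with hψ
  have hψdef : ∀ l (hl : l ∈ L),
      ψ l = ((e ⟨trPerm l, trPerm_mem hl⟩ : ↥(SplitCrys L' H' hH'L')) : Equiv.Perm V3) 0 := fun l hl => dif_pos hl
  have hTR : ∀ l (hl : l ∈ L),
      ((e ⟨trPerm l, trPerm_mem hl⟩ : ↥(SplitCrys L' H' hH'L')) : Equiv.Perm V3) = trPerm (ψ l) := by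
    intro l hl
    set g : ↥(SplitCrys L H hHL) := ⟨trPerm l, trPerm_mem hl⟩ with hg'
    have hg : ∀ x, (g : Equiv.Perm V3) x = (g : Equiv.Perm V3) 0 + x := by
      intro x
      show l + x = (l + 0) + x
      rw [add_zero]
    have hgc := (trans_char hspanL g).2 hg
    have hgc' : ∀ a' : ↥(SplitCrys L' H' hH'L'), a' * e g * a'⁻¹ * e g = e g * (a' * e g * a'⁻¹) := by
      intro a'
      have := congrArg e (hgc (e.symm a'))
      simpa [map_mul, map_inv, MulEquiv.apply_symm_apply] using this
    have htr' := (trans_char hspanL' (e g)).1 hgc'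
    apply Equiv.ext; intro x
    rw [htr' x, trPerm_apply, hψdef l hl]
  have hmem : ∀ l, l ∈ L → ψ l ∈ L' := by
    intro l hl
    obtain ⟨t', ht', h', hh', hf⟩ := (e ⟨trPerm l, trPerm_mem hl⟩).2
    have : ψ l = t' := by rw [hψdef l hl, hf 0, Matrix.mulVec_zero, add_zero]
    rw [this]; exact ht'
  have hadd : ∀ l₁ l₂, l₁ ∈ L → l₂ ∈ L → ψ (l₁ + l₂) = ψ l₁ + ψ l₂ := by
    intro l₁ l₂ h₁ h₂
    have hprod : (⟨trPerm (l₁ + l₂), trPerm_mem (L.add_mem h₁ h₂)⟩ : ↥(SplitCrys L H hHL))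
        = ⟨trPerm l₁, trPerm_mem h₁⟩ * ⟨trPerm l₂, trPerm_mem h₂⟩ := by
      apply Subtype.ext; apply Equiv.ext; intro x
      show l₁ + l₂ + x = l₁ + (l₂ + x)
      rw [add_assoc]
    have key : trPerm (ψ (l₁ + l₂)) 0 = trPerm (ψ l₁) (trPerm (ψ l₂) 0) := by
      conv_lhs => rw [← hTR (l₁ + l₂) (L.add_mem h₁ h₂), hprod, map_mul]
      rw [Subgroup.coe_mul, Equiv.Perm.mul_apply, hTR l₁ h₁, hTR l₂ h₂]
    simpa [trPerm_apply] using key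
  have hzero : ψ 0 = 0 := by
    have h0 : (⟨trPerm (0 : V3), trPerm_mem L.zero_mem⟩ : ↥(SplitCrys L H hHL)) = 1 := by
      apply Subtype.ext; apply Equiv.ext; intro x
      show (0 : V3) + x = x
      rw [zero_add]
    have ht := hTR 0 L.zero_mem
    rw [h0, map_one] at ht
    have := congrArg (fun p : Equiv.Perm V3 => p 0) ht
    simpa [trPerm_apply] using this.symm
  have hneg : ∀ l, l ∈ L → ψ (-l) = - ψ l := by
    intro l hl
    have h1 := hadd l (-l) hl (L.neg_mem hl)
    rw [add_neg_cancel, hzero] at h1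
    exact eq_neg_of_add_eq_zero_left (by rw [add_comm]; exact h1.symm)
  refine ⟨ψ, hmem, hTR, hadd, hzero, ?_⟩
  intro n l hl
  induction n using Int.induction_on with
  | zero => simpa using hzero
  | succ n ih =>
      rw [add_zsmul, one_zsmul, hadd _ l (L.zsmul_mem hl n) hl, ih, add_zsmul, one_zsmul]
  | pred n ih =>
      have h2 : (-(n : ℤ) - 1) • l = (-(n : ℤ)) • l + (-l) := by module
      rw [h2, hadd _ (-l) (L.zsmul_mem hl (-(n : ℤ))) (L.neg_mem hl), ih, hneg l hl]
      module


private lemma rotPerm_mem {L : AddSubgroup V3} {H : Subgroup OG3}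
    {hHL : ∀ h ∈ H, (fun v => Matrix.mulVec ((h : M3)) v) '' (L : Set V3) = (L : Set V3)}
    {h : OG3} (hh : h ∈ H) :
    matPerm (h : M3) (orth_det_isUnit h) ∈ SplitCrys L H hHL :=
  ⟨0, L.zero_mem, h, hh, fun x => by simp [matPerm_apply]⟩

private lemma exists_lam {L : AddSubgroup V3} (hL : IsLattice L) (ψ : V3 → V3)
    (hadd : ∀ l₁ l₂, l₁ ∈ L → l₂ ∈ L → ψ (l₁ + l₂) = ψ l₁ + ψ l₂) (hzero : ψ 0 = 0)
    (hzsmul : ∀ (n : ℤ) l, l ∈ L → ψ (n • l) = n • ψ l) :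
    ∃ lam : M3, ∀ l ∈ L, lam.mulVec l = ψ l := by
  obtain ⟨b, hb⟩ := hL
  have hmemiff : ∀ v : V3, v ∈ L ↔ v ∈ Submodule.span ℤ (Set.range ⇑b) := by
    intro v
    constructor <;> intro hv
    · have h1 : v ∈ (L : Set V3) := hv
      rw [hb] at h1; exact h1
    · have h1 : v ∈ (↑(Submodule.span ℤ (Set.range ⇑b)) : Set V3) := hv
      rw [← hb] at h1; exact h1
  refine ⟨LinearMap.toMatrix' (b.constr ℝ fun i => ψ (b i)), ?_⟩
  have hmv : ∀ v, (LinearMap.toMatrix' (b.constr ℝ fun i => ψ (b i))).mulVec v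
      = (b.constr ℝ fun i => ψ (b i)) v := by
    intro v
    rw [← Matrix.toLin'_apply, Matrix.toLin'_toMatrix']
  intro l hl
  rw [hmv]
  refine Submodule.span_induction ?_ ?_ ?_ ?_ ((hmemiff l).1 hl)
  · rintro x ⟨i, rfl⟩
    exact b.constr_basis ℝ _ i
  · rw [map_zero, hzero]
  · intro x y hx hy ihx ihy
    rw [map_add, ihx, ihy, hadd x y ((hmemiff x).2 hx) ((hmemiff y).2 hy)]
  · intro n x hx ih
    rw [map_zsmul, ih, hzsmul n x ((hmemiff x).2 hx)]

/-- Let `L, L'` be lattices in `ℝ³` and `H, H' ≤ O(3)` with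
`H·L = L` and `H'·L' = L'`.  Then `Γ(L,H)` and `Γ(L',H')` are isomorphic as abstract
groups if and only if the pairs `(L,H)` and `(L',H')` are arithmetically equivalent,
i.e., iff there is `λ ∈ GL₃(ℝ)` such that `λ·L = L'` and `λHλ⁻¹ = H'`. -/
theorem gammaLH_iso_iff_arithmetically_equivalent
    (L L' : AddSubgroup (Fin 3 → ℝ)) (hL : IsLattice L) (hL' : IsLattice L')
    (H H' : Subgroup (Matrix.orthogonalGroup (Fin 3) ℝ))
    (hHL : ∀ h ∈ H, (fun v => Matrix.mulVec ((h : Matrix (Fin 3) (Fin 3) ℝ)) v) ''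
      (L : Set (Fin 3 → ℝ)) = (L : Set (Fin 3 → ℝ)))
    (hH'L' : ∀ h ∈ H', (fun v => Matrix.mulVec ((h : Matrix (Fin 3) (Fin 3) ℝ)) v) ''
      (L' : Set (Fin 3 → ℝ)) = (L' : Set (Fin 3 → ℝ))) :
    Nonempty (↥(SplitCrys L H hHL) ≃* ↥(SplitCrys L' H' hH'L')) ↔
      ∃ lam : Matrix (Fin 3) (Fin 3) ℝ, IsUnit lam.det ∧
        (fun v => Matrix.mulVec lam v) '' (L : Set (Fin 3 → ℝ)) = (L' : Set (Fin 3 → ℝ)) ∧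
        (fun h : Matrix.orthogonalGroup (Fin 3) ℝ =>
            lam * (h : Matrix (Fin 3) (Fin 3) ℝ) * lam⁻¹) ''
          (H : Set (Matrix.orthogonalGroup (Fin 3) ℝ)) =
        (fun h : Matrix.orthogonalGroup (Fin 3) ℝ => (h : Matrix (Fin 3) (Fin 3) ℝ)) ''
          (H' : Set (Matrix.orthogonalGroup (Fin 3) ℝ)) := by
  constructor
  · rintro ⟨e⟩
    have hspanL := lattice_span_top hL
    have hspanL' := lattice_span_top hL'
    obtain ⟨ψ, hψmem, hψTR, hψadd, hψzero, hψz⟩ := psi_props hspanL hspanL' e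
    obtain ⟨φ, hφmem, hφTR, hφadd, hφzero, hφz⟩ := psi_props hspanL' hspanL e.symm
    have hφψ : ∀ l, l ∈ L → φ (ψ l) = l := by
      intro l hl
      have h1 : (⟨trPerm (ψ l), trPerm_mem (hψmem l hl)⟩ : ↥(SplitCrys L' H' hH'L'))
          = e ⟨trPerm l, trPerm_mem hl⟩ := Subtype.ext (hψTR l hl).symm
      have h2 := hφTR (ψ l) (hψmem l hl)
      rw [h1, MulEquiv.symm_apply_apply] at h2
      have h3 := congrArg (fun p : Equiv.Perm (Fin 3 → ℝ) => p 0) h2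
      simpa [trPerm_apply] using h3.symm
    have hψφ : ∀ l', l' ∈ L' → ψ (φ l') = l' := by
      intro l' hl'
      have h1 : (⟨trPerm (φ l'), trPerm_mem (hφmem l' hl')⟩ : ↥(SplitCrys L H hHL))
          = e.symm ⟨trPerm l', trPerm_mem hl'⟩ := Subtype.ext (hφTR l' hl').symm
      have h2 := hψTR (φ l') (hφmem l' hl')
      rw [h1, MulEquiv.apply_symm_apply] at h2
      have h3 := congrArg (fun p : Equiv.Perm (Fin 3 → ℝ) => p 0) h2
      simpa [trPerm_apply] using h3.symm
    obtain ⟨lam, hlam⟩ := exists_lam hL ψ hψadd hψzero hψz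
    obtain ⟨lam2, hlam2⟩ := exists_lam hL' φ hφadd hφzero hφz
    have hone : lam * lam2 = 1 := by
      refine matrix_eq_on_span hspanL' fun v hv => ?_
      rw [← Matrix.mulVec_mulVec, hlam2 v hv, hlam (φ v) (hφmem v hv), hψφ v hv,
        Matrix.one_mulVec]
    have hone' : lam2 * lam = 1 := by
      refine matrix_eq_on_span hspanL fun v hv => ?_
      rw [← Matrix.mulVec_mulVec, hlam v hv, hlam2 (ψ v) (hψmem v hv), hφψ v hv,
        Matrix.one_mulVec]
    have hdet : IsUnit lam.det := by
      have hd : lam.det * lam2.det = 1 := by rw [← Matrix.det_mul, hone, Matrix.det_one]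
      exact IsUnit.of_mul_eq_one _ hd
    have hinv : lam⁻¹ = lam2 := Matrix.inv_eq_right_inv hone
    have hcompat : ∀ h : Matrix.orthogonalGroup (Fin 3) ℝ, h ∈ H → ∃ h' ∈ H',
        ∀ l ∈ L, ψ ((h : Matrix (Fin 3) (Fin 3) ℝ).mulVec l)
          = ((h' : Matrix (Fin 3) (Fin 3) ℝ)).mulVec (ψ l) := by
      intro h hh
      obtain ⟨s, hs, h', hh', hf⟩ :=
        (e ⟨matPerm (h : M3) (orth_det_isUnit h), rotPerm_mem hh⟩).2
      refine ⟨h', hh', fun l hl => ?_⟩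
      have hGL : (h : M3).mulVec l ∈ L := memL' hHL hh hl
      have hswap : (⟨matPerm (h : M3) (orth_det_isUnit h), rotPerm_mem hh⟩ :
            ↥(SplitCrys L H hHL)) * ⟨trPerm l, trPerm_mem hl⟩
          = ⟨trPerm ((h : M3).mulVec l), trPerm_mem hGL⟩ *
            ⟨matPerm (h : M3) (orth_det_isUnit h), rotPerm_mem hh⟩ := by
        apply Subtype.ext; apply Equiv.ext; intro x
        show (h : M3).mulVec (l + x) = (h : M3).mulVec l + (h : M3).mulVec x
        rw [Matrix.mulVec_add]
      have hkey := congrArg (fun z : ↥(SplitCrys L' H' hH'L') =>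
        (z : Equiv.Perm (Fin 3 → ℝ)) 0) (congrArg e hswap)
      simp only [map_mul, Subgroup.coe_mul, Equiv.Perm.mul_apply] at hkey
      rw [hψTR l hl, hψTR _ hGL, trPerm_apply, trPerm_apply, hf, hf 0] at hkey
      simp only [Matrix.mulVec_zero, Matrix.mulVec_add, add_zero] at hkey
      linear_combination -hkey
    have hcompat' : ∀ h' : Matrix.orthogonalGroup (Fin 3) ℝ, h' ∈ H' → ∃ h ∈ H,
        ∀ l' ∈ L', φ ((h' : Matrix (Fin 3) (Fin 3) ℝ).mulVec l')
          = ((h : Matrix (Fin 3) (Fin 3) ℝ)).mulVec (φ l') := by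
      intro h' hh'
      obtain ⟨s, hs, h, hh, hf⟩ :=
        (e.symm ⟨matPerm (h' : M3) (orth_det_isUnit h'), rotPerm_mem hh'⟩).2
      refine ⟨h, hh, fun l hl => ?_⟩
      have hGL : (h' : M3).mulVec l ∈ L' := memL' hH'L' hh' hl
      have hswap : (⟨matPerm (h' : M3) (orth_det_isUnit h'), rotPerm_mem hh'⟩ :
            ↥(SplitCrys L' H' hH'L')) * ⟨trPerm l, trPerm_mem hl⟩
          = ⟨trPerm ((h' : M3).mulVec l), trPerm_mem hGL⟩ *
            ⟨matPerm (h' : M3) (orth_det_isUnit h'), rotPerm_mem hh'⟩ := by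
        apply Subtype.ext; apply Equiv.ext; intro x
        show (h' : M3).mulVec (l + x) = (h' : M3).mulVec l + (h' : M3).mulVec x
        rw [Matrix.mulVec_add]
      have hkey := congrArg (fun z : ↥(SplitCrys L H hHL) =>
        (z : Equiv.Perm (Fin 3 → ℝ)) 0) (congrArg e.symm hswap)
      simp only [map_mul, Subgroup.coe_mul, Equiv.Perm.mul_apply] at hkey
      rw [hφTR l hl, hφTR _ hGL, trPerm_apply, trPerm_apply, hf, hf 0] at hkey
      simp only [Matrix.mulVec_zero, Matrix.mulVec_add, add_zero] at hkey
      linear_combination -hkey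
    refine ⟨lam, hdet, ?_, ?_⟩
    · ext v
      constructor
      · rintro ⟨t, ht, rfl⟩
        show lam.mulVec t ∈ (L' : Set (Fin 3 → ℝ))
        rw [hlam t ht]
        exact hψmem t ht
      · intro hv
        exact ⟨φ v, hφmem v hv, by
          show lam.mulVec (φ v) = v
          rw [hlam (φ v) (hφmem v hv), hψφ v hv]⟩
    · ext A
      constructor
      · rintro ⟨h, hh, rfl⟩
        obtain ⟨h', hh', hcomm⟩ := hcompat h hh
        have hmateq : lam * (h : Matrix (Fin 3) (Fin 3) ℝ)
            = (h' : Matrix (Fin 3) (Fin 3) ℝ) * lam := by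
          refine matrix_eq_on_span hspanL fun v hv => ?_
          have hGL : (h : M3).mulVec v ∈ L := memL' hHL hh hv
          rw [← Matrix.mulVec_mulVec, ← Matrix.mulVec_mulVec, hlam v hv, hlam _ hGL, hcomm v hv]
        refine ⟨h', hh', ?_⟩
        show (h' : Matrix (Fin 3) (Fin 3) ℝ) = lam * (h : Matrix (Fin 3) (Fin 3) ℝ) * lam⁻¹
        rw [hmateq, Matrix.mul_assoc, hinv, hone, Matrix.mul_one]
      · rintro ⟨h', hh', rfl⟩
        obtain ⟨h, hh, hcomm⟩ := hcompat' h' hh'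
        have hmateq : lam2 * (h' : Matrix (Fin 3) (Fin 3) ℝ)
            = (h : Matrix (Fin 3) (Fin 3) ℝ) * lam2 := by
          refine matrix_eq_on_span hspanL' fun v hv => ?_
          have hGL : (h' : M3).mulVec v ∈ L' := memL' hH'L' hh' hv
          rw [← Matrix.mulVec_mulVec, ← Matrix.mulVec_mulVec, hlam2 v hv, hlam2 _ hGL,
            hcomm v hv]
        refine ⟨h, hh, ?_⟩
        show lam * (h : Matrix (Fin 3) (Fin 3) ℝ) * lam⁻¹ = (h' : Matrix (Fin 3) (Fin 3) ℝ)
        rw [hinv, Matrix.mul_assoc, ← hmateq, ← Matrix.mul_assoc, hone, Matrix.one_mul]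
  · rintro ⟨lam, hdet, himL, himH⟩
    exact easy_dir hHL hH'L' hdet himL himH
end
end
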